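/- arXiv:1701.07324 — 3 statements merged into one kernel-verified Lean document; each statement's English description precedes it below -/
import Mathlib

section
/- Let D and D' be division rings, m, n, m', n' ≥ 2, and let φ: D^{m×n} → D'^{m'×n'} be a non-degenerate graph homomorphism with φ(0) = 0. Suppose M and N are two distinct maximal sets in D^{m×n} of the same type (resp. of different types) with 0 ∈ M and M ∩ N ≠ ∅. Then there exist maximal sets M' and N' in D'^{m'×n'} of the same type (resp. of different types) such that φ(M) ⊆ M' and φ(N) ⊆ N'. -/
open Matrix

/-- Rank of a matrix over a division ring: dimension of the left row space. -/
noncomputable def mrank {D : Type} [DivisionRing D] {m n : ℕ} (A : Matrix (Fin m) (Fin n) D) : ℕ :=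
  Module.finrank D (Submodule.span D (Set.range fun i : Fin m => fun j : Fin n => A i j))

/-- The standard maximal set of type one: matrices whose rows other than the first are zero. -/
def M1set (D : Type) [DivisionRing D] (m n : ℕ) : Set (Matrix (Fin m) (Fin n) D) :=
  {X | ∀ i j, i.val ≠ 0 → X i j = 0}

/-- The standard maximal set of type two: matrices whose columns other than the first are zero. -/
def N1set (D : Type) [DivisionRing D] (m n : ℕ) : Set (Matrix (Fin m) (Fin n) D) :=
  {X | ∀ i j, j.val ≠ 0 → X i j = 0}

/-- A maximal set of type one: a set of the form `P·M₁ + A` with `P` invertible. -/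
def IsTypeOne {D : Type} [DivisionRing D] {m n : ℕ} (S : Set (Matrix (Fin m) (Fin n) D)) : Prop :=
  ∃ P : Matrix (Fin m) (Fin m) D, ∃ A : Matrix (Fin m) (Fin n) D,
    IsUnit P ∧ S = (fun X => P * X + A) '' M1set D m n

/-- A maximal set of type two: a set of the form `N₁·Q + A` with `Q` invertible. -/
def IsTypeTwo {D : Type} [DivisionRing D] {m n : ℕ} (S : Set (Matrix (Fin m) (Fin n) D)) : Prop :=
  ∃ Q : Matrix (Fin n) (Fin n) D, ∃ A : Matrix (Fin m) (Fin n) D,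
    IsUnit Q ∧ S = (fun X => X * Q + A) '' N1set D m n

/-- A maximal set (maximal clique of the adjacency graph): of type one or type two. -/
def IsMaximalSet {D : Type} [DivisionRing D] {m n : ℕ}
    (S : Set (Matrix (Fin m) (Fin n) D)) : Prop :=
  IsTypeOne S ∨ IsTypeTwo S

/-- A graph homomorphism `φ` is degenerate if there is a matrix `A` of rank at most one and two
maximal sets of different types `Ms`, `Ns` in the target with `φ A ∈ Ms ∩ Ns` and the image of
the unit ball around `A` contained in `Ms ∪ Ns`. -/
def Degenerate {D D' : Type} [DivisionRing D] [DivisionRing D'] {m n m' n' : ℕ}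
    (φ : Matrix (Fin m) (Fin n) D → Matrix (Fin m') (Fin n') D') : Prop :=
  ∃ A : Matrix (Fin m) (Fin n) D, mrank A ≤ 1 ∧
    ∃ Ms Ns : Set (Matrix (Fin m') (Fin n') D'),
      IsTypeOne Ms ∧ IsTypeTwo Ns ∧ φ A ∈ Ms ∩ Ns ∧
      φ '' {X | mrank (X - A) ≤ 1} ⊆ Ms ∪ Ns

namespace Aux
variable {K : Type} [DivisionRing K] {m n : ℕ}

lemma matrix_ne_zero_iff (A : Matrix (Fin m) (Fin n) K) : A ≠ 0 ↔ ∃ i j, A i j ≠ 0 := by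
  constructor
  · intro h
    by_contra hc
    push_neg at hc
    exact h (by ext i j; exact hc i j)
  · rintro ⟨i, j, h⟩ rfl
    exact h rfl

lemma vec_ne_zero_iff {k : ℕ} (v : Fin k → K) : v ≠ 0 ↔ ∃ i, v i ≠ 0 := by
  constructor
  · intro h
    by_contra hc
    push_neg at hc
    exact h (funext fun i => hc i)
  · rintro ⟨i, h⟩ rfl
    exact h rfl

lemma mrank_le_one_of (A : Matrix (Fin m) (Fin n) K) (u : Fin m → K) (v : Fin n → K)
    (h : ∀ i j, A i j = u i * v j) : mrank A ≤ 1 := by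
  have hFD : FiniteDimensional K (Submodule.span K ({v} : Set (Fin n → K))) :=
    FiniteDimensional.span_of_finite K (Set.finite_singleton v)
  have hle : Submodule.span K (Set.range fun i : Fin m => fun j : Fin n => A i j)
      ≤ Submodule.span K ({v} : Set (Fin n → K)) := by
    rw [Submodule.span_le]
    intro w hw
    obtain ⟨i, rfl⟩ := hw
    rw [SetLike.mem_coe, Submodule.mem_span_singleton]
    exact ⟨u i, by funext j; simp [h i j, Pi.smul_apply, smul_eq_mul]⟩
  have h1 : Module.finrank K (Submodule.span K ({v} : Set (Fin n → K))) ≤ 1 := by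
    by_cases hv : v = 0
    · subst hv
      rw [Submodule.span_zero_singleton]
      simp [finrank_bot]
    · rw [finrank_span_singleton hv]
  exact le_trans (Submodule.finrank_mono hle) h1

lemma mrank_zero_iff (A : Matrix (Fin m) (Fin n) K) : mrank A = 0 ↔ A = 0 := by
  constructor
  · intro h
    by_contra hA
    obtain ⟨i, j, hij⟩ := (matrix_ne_zero_iff A).1 hA
    have hrow : (fun j : Fin n => A i j) ≠ 0 := by
      intro hc
      exact hij (congrFun hc j)
    have hFD : FiniteDimensional K
        (Submodule.span K (Set.range fun i : Fin m => fun j : Fin n => A i j)) :=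
      FiniteDimensional.span_of_finite K (Set.finite_range _)
    have hle : Submodule.span K ({fun j : Fin n => A i j} : Set (Fin n → K))
        ≤ Submodule.span K (Set.range fun i : Fin m => fun j : Fin n => A i j) :=
      Submodule.span_mono (Set.singleton_subset_iff.2 ⟨i, rfl⟩)
    have := Submodule.finrank_mono hle
    rw [finrank_span_singleton hrow] at this
    unfold mrank at h
    omega
  · intro h
    subst h
    have : Submodule.span K (Set.range fun i : Fin m => fun j : Fin n =>
        (0 : Matrix (Fin m) (Fin n) K) i j) = ⊥ := by
      rw [Submodule.span_eq_bot]
      rintro w ⟨i, rfl⟩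
      rfl
    rw [mrank, this, finrank_bot]

lemma mrank_le_one_iff (A : Matrix (Fin m) (Fin n) K) :
    mrank A ≤ 1 ↔ ∃ (u : Fin m → K) (v : Fin n → K), ∀ i j, A i j = u i * v j := by
  constructor
  · intro h
    by_cases hA : A = 0
    · exact ⟨(0 : Fin m → K), (0 : Fin n → K), by subst hA; intro i j; simp⟩
    · obtain ⟨i0, j0, h0⟩ := (matrix_ne_zero_iff A).1 hA
      set v : Fin n → K := fun j => A i0 j with hv
      have hvne : v ≠ 0 := fun hc => h0 (congrFun hc j0)
      have hFD : FiniteDimensional K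
          (Submodule.span K (Set.range fun i : Fin m => fun j : Fin n => A i j)) :=
        FiniteDimensional.span_of_finite K (Set.finite_range _)
      have hle : Submodule.span K ({v} : Set (Fin n → K))
          ≤ Submodule.span K (Set.range fun i : Fin m => fun j : Fin n => A i j) :=
        Submodule.span_mono (Set.singleton_subset_iff.2 ⟨i0, rfl⟩)
      have heq : Submodule.span K ({v} : Set (Fin n → K))
          = Submodule.span K (Set.range fun i : Fin m => fun j : Fin n => A i j) := by
        apply Submodule.eq_of_le_of_finrank_le hle
        rw [finrank_span_singleton hvne]
        exact h
      have hmem : ∀ i : Fin m, (fun j => A i j) ∈ Submodule.span K ({v} : Set (Fin n → K)) := by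
        intro i
        rw [heq]
        exact Submodule.subset_span ⟨i, rfl⟩
      choose u hu using fun i => Submodule.mem_span_singleton.1 (hmem i)
      refine ⟨u, v, fun i j => ?_⟩
      have := congrFun (hu i) j
      simpa [Pi.smul_apply, smul_eq_mul] using this.symm
  · rintro ⟨u, v, h⟩
    exact mrank_le_one_of A u v h

lemma mrank_eq_one_of (A : Matrix (Fin m) (Fin n) K) (u : Fin m → K) (v : Fin n → K)
    (h : ∀ i j, A i j = u i * v j) (hA : A ≠ 0) : mrank A = 1 := by
  have h1 := mrank_le_one_of A u v h
  have h0 : mrank A ≠ 0 := fun hc => hA ((mrank_zero_iff A).1 hc)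
  omega


lemma exists_nonzero_decomp (A : Matrix (Fin m) (Fin n) K) (h : mrank A ≤ 1) (hA : A ≠ 0) :
    ∃ (u : Fin m → K) (v : Fin n → K), u ≠ 0 ∧ v ≠ 0 ∧ ∀ i j, A i j = u i * v j := by
  obtain ⟨u, v, huv⟩ := (mrank_le_one_iff A).1 h
  obtain ⟨i0, j0, h0⟩ := (matrix_ne_zero_iff A).1 hA
  rw [huv i0 j0] at h0
  refine ⟨u, v, ?_, ?_, huv⟩
  · exact (vec_ne_zero_iff u).2 ⟨i0, fun hc => h0 (by rw [hc, zero_mul])⟩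
  · exact (vec_ne_zero_iff v).2 ⟨j0, fun hc => h0 (by rw [hc, mul_zero])⟩

/-- If `u v = x y` entrywise with `u, v` nonzero, then `x` is a right multiple of `u`
and `y` is a left multiple of `v`. -/
lemma parallel {u x : Fin m → K} {v y : Fin n → K}
    (h : ∀ i j, u i * v j = x i * y j) (hu : u ≠ 0) (hv : v ≠ 0) :
    (∃ mu : K, mu ≠ 0 ∧ ∀ i, x i = u i * mu) ∧ (∃ la : K, la ≠ 0 ∧ ∀ j, y j = la * v j) := by
  obtain ⟨i0, hi0⟩ := (vec_ne_zero_iff u).1 hu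
  obtain ⟨j0, hj0⟩ := (vec_ne_zero_iff v).1 hv
  have hne : x i0 * y j0 ≠ 0 := by rw [← h i0 j0]; exact mul_ne_zero hi0 hj0
  have hx0 : x i0 ≠ 0 := fun hc => hne (by rw [hc, zero_mul])
  have hy0 : y j0 ≠ 0 := fun hc => hne (by rw [hc, mul_zero])
  constructor
  · refine ⟨v j0 * (y j0)⁻¹, mul_ne_zero hj0 (inv_ne_zero hy0), fun i => ?_⟩
    have := h i j0
    rw [← mul_assoc, this, mul_assoc, mul_inv_cancel₀ hy0, mul_one]
  · refine ⟨(x i0)⁻¹ * u i0, mul_ne_zero (inv_ne_zero hx0) hi0, fun j => ?_⟩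
    have := h i0 j
    rw [mul_assoc, this, ← mul_assoc, inv_mul_cancel₀ hx0, one_mul]

/-- Two left-independent vectors. -/
lemma indep2 {v y : Fin n → K} (hv : v ≠ 0)
    (hno : ∀ la : K, y ≠ fun j => la * v j) :
    ∀ a b : K, (∀ j, a * v j + b * y j = 0) → a = 0 ∧ b = 0 := by
  intro a b hab
  obtain ⟨j0, hj0⟩ := (vec_ne_zero_iff v).1 hv
  by_cases hb : b = 0
  · subst hb
    have h0 : a * v j0 = 0 := by have := hab j0; simpa using this
    refine ⟨?_, rfl⟩
    rcases mul_eq_zero.1 h0 with h | h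
    · exact h
    · exact absurd h hj0
  · exfalso
    apply hno (-(b⁻¹ * a))
    funext j
    have h1 : b * y j = -(a * v j) := eq_neg_of_add_eq_zero_right (hab j)
    have : y j = b⁻¹ * (b * y j) := by rw [← mul_assoc, inv_mul_cancel₀ hb, one_mul]
    rw [this, h1, mul_neg, ← mul_assoc, ← neg_mul]

/-- Key adjacency lemma for rank-one matrices. -/
lemma rank_one_adjacent {u x : Fin m → K} {v y : Fin n → K}
    (hu : u ≠ 0) (hv : v ≠ 0) (hx : x ≠ 0) (hy : y ≠ 0)
    (h : mrank (fun i j => u i * v j - x i * y j : Matrix (Fin m) (Fin n) K) ≤ 1) :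
    (∃ mu : K, mu ≠ 0 ∧ ∀ i, x i = u i * mu) ∨ (∃ la : K, la ≠ 0 ∧ ∀ j, y j = la * v j) := by
  by_cases hyv : ∃ la : K, la ≠ 0 ∧ ∀ j, y j = la * v j
  · exact Or.inr hyv
  have hno : ∀ la : K, y ≠ fun j => la * v j := by
    intro la hc
    rcases eq_or_ne la 0 with h0 | h0
    · exact hy (by rw [hc, h0]; funext j; simp)
    · exact hyv ⟨la, h0, fun j => congrFun hc j⟩
  have hind := indep2 hv hno
  obtain ⟨s, w, hsw⟩ := (mrank_le_one_iff _).1 h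
  obtain ⟨i0, hi0⟩ := (vec_ne_zero_iff u).1 hu
  have hs0 : s i0 ≠ 0 := by
    intro hc
    have hz : ∀ j, u i0 * v j + (-(x i0)) * y j = 0 := by
      intro j
      have h1 := hsw i0 j
      rw [hc, zero_mul] at h1
      rw [neg_mul, ← sub_eq_add_neg, ← h1]
    exact hi0 (hind _ _ hz).1
  set al : K := (s i0)⁻¹ * u i0 with hal
  set be : K := -((s i0)⁻¹ * x i0) with hbe
  have hal0 : al ≠ 0 := mul_ne_zero (inv_ne_zero hs0) hi0
  have hw : ∀ j, w j = al * v j + be * y j := by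
    intro j
    have h1 := hsw i0 j
    have h2 : (s i0)⁻¹ * (s i0 * w j) = (s i0)⁻¹ * (u i0 * v j - x i0 * y j) := by rw [← h1]
    rw [← mul_assoc, inv_mul_cancel₀ hs0, one_mul] at h2
    rw [h2, hal, hbe, mul_sub, ← mul_assoc, ← mul_assoc, neg_mul, ← sub_eq_add_neg]
  have hux : ∀ i, u i = s i * al ∧ x i = -(s i * be) := by
    intro i
    have key : ∀ j, (u i - s i * al) * v j + (-(x i) - s i * be) * y j = 0 := by
      intro j
      have h1 := hsw i j
      rw [hw j] at h1
      have h2 : (u i - s i * al) * v j + (-(x i) - s i * be) * y j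
          = u i * v j - x i * y j - s i * (al * v j + be * y j) := by noncomm_ring
      rw [h2, h1, sub_self]
    have h3 := hind _ _ key
    constructor
    · have := h3.1; rwa [sub_eq_zero] at this
    · have := h3.2; rw [sub_eq_zero] at this; rw [← this, neg_neg]
  left
  refine ⟨-(al⁻¹ * be), ?_, fun i => ?_⟩
  · obtain ⟨i1, hi1⟩ := (vec_ne_zero_iff x).1 hx
    intro hc
    have h4 := (hux i1).2
    have h5 := (hux i1).1
    have hsi : s i1 = u i1 * al⁻¹ := by
      rw [h5, mul_assoc, mul_inv_cancel₀ hal0, mul_one]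
    have hxi : x i1 = u i1 * (-(al⁻¹ * be)) := by
      rw [h4, hsi, mul_assoc]; simp [mul_neg]
    apply hi1
    rw [hxi, hc, mul_zero]
  · have h4 := (hux i).2
    have hsi : s i = u i * al⁻¹ := by
      rw [(hux i).1, mul_assoc, mul_inv_cancel₀ hal0, mul_one]
    rw [h4, hsi, mul_assoc]; simp [mul_neg]


lemma mrank_congr {A A' : Matrix (Fin m) (Fin n) K} (h : ∀ i j, A i j = A' i j) :
    mrank A = mrank A' := by
  have : A = A' := by ext i j; exact h i j
  rw [this]

def colSet (c : Fin m → K) (B : Matrix (Fin m) (Fin n) K) : Set (Matrix (Fin m) (Fin n) K) :=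
  {X | ∃ x : Fin n → K, ∀ i j, X i j = c i * x j + B i j}

def rowSet (r : Fin n → K) (B : Matrix (Fin m) (Fin n) K) : Set (Matrix (Fin m) (Fin n) K) :=
  {X | ∃ u : Fin m → K, ∀ i j, X i j = u i * r j + B i j}

lemma self_mem_colSet (c : Fin m → K) (B : Matrix (Fin m) (Fin n) K) : B ∈ colSet c B :=
  ⟨0, fun i j => by simp⟩

lemma self_mem_rowSet (r : Fin n → K) (B : Matrix (Fin m) (Fin n) K) : B ∈ rowSet r B :=
  ⟨0, fun i j => by simp⟩

lemma colSet_diff_rank {c : Fin m → K} {B X Y : Matrix (Fin m) (Fin n) K}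
    (hX : X ∈ colSet c B) (hY : Y ∈ colSet c B) : mrank (X - Y) ≤ 1 := by
  obtain ⟨x, hx⟩ := hX
  obtain ⟨y, hy⟩ := hY
  exact mrank_le_one_of _ c (fun j => x j - y j)
    (fun i j => by rw [Matrix.sub_apply, hx i j, hy i j]; noncomm_ring)

lemma colSet_diff_rank_one {c : Fin m → K} {B X Y : Matrix (Fin m) (Fin n) K}
    (hX : X ∈ colSet c B) (hY : Y ∈ colSet c B) (hne : X ≠ Y) : mrank (X - Y) = 1 := by
  have h1 := colSet_diff_rank hX hY
  have h0 : mrank (X - Y) ≠ 0 := fun hc =>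
    hne (sub_eq_zero.1 ((mrank_zero_iff _).1 hc))
  omega

lemma rowSet_diff_rank {r : Fin n → K} {B X Y : Matrix (Fin m) (Fin n) K}
    (hX : X ∈ rowSet r B) (hY : Y ∈ rowSet r B) : mrank (X - Y) ≤ 1 := by
  obtain ⟨x, hx⟩ := hX
  obtain ⟨y, hy⟩ := hY
  exact mrank_le_one_of _ (fun i => x i - y i) r
    (fun i j => by rw [Matrix.sub_apply, hx i j, hy i j]; noncomm_ring)

lemma rowSet_diff_rank_one {r : Fin n → K} {B X Y : Matrix (Fin m) (Fin n) K}
    (hX : X ∈ rowSet r B) (hY : Y ∈ rowSet r B) (hne : X ≠ Y) : mrank (X - Y) = 1 := by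
  have h1 := rowSet_diff_rank hX hY
  have h0 : mrank (X - Y) ≠ 0 := fun hc =>
    hne (sub_eq_zero.1 ((mrank_zero_iff _).1 hc))
  omega

lemma colSet_eq_of_parallel {c e : Fin m → K} {B : Matrix (Fin m) (Fin n) K}
    {mu : K} (hmu : mu ≠ 0) (h : ∀ i, e i = c i * mu) : colSet e B = colSet c B := by
  ext X
  constructor
  · rintro ⟨x, hx⟩
    exact ⟨fun j => mu * x j, fun i j => by rw [hx i j, h i, mul_assoc]⟩
  · rintro ⟨x, hx⟩
    refine ⟨fun j => mu⁻¹ * x j, fun i j => ?_⟩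
    rw [hx i j, h i, mul_assoc, ← mul_assoc mu, mul_inv_cancel₀ hmu, one_mul]

lemma rowSet_eq_of_parallel {r f : Fin n → K} {B : Matrix (Fin m) (Fin n) K}
    {la : K} (hla : la ≠ 0) (h : ∀ j, f j = la * r j) : rowSet f B = rowSet r B := by
  ext X
  constructor
  · rintro ⟨u, hu⟩
    exact ⟨fun i => u i * la, fun i j => by rw [hu i j, h j, mul_assoc]⟩
  · rintro ⟨u, hu⟩
    refine ⟨fun i => u i * la⁻¹, fun i j => ?_⟩
    rw [hu i j, h j, mul_assoc, ← mul_assoc la⁻¹, inv_mul_cancel₀ hla, one_mul]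

lemma decomp_of_mem_colSet {c : Fin m → K} {B X : Matrix (Fin m) (Fin n) K}
    (hX : X ∈ colSet c B) (hne : X ≠ B) :
    ∃ x : Fin n → K, x ≠ 0 ∧ ∀ i j, X i j = c i * x j + B i j := by
  obtain ⟨x, hx⟩ := hX
  refine ⟨x, ?_, hx⟩
  intro hc
  subst hc
  exact hne (by ext i j; rw [hx i j]; simp)

lemma decomp_of_mem_rowSet {r : Fin n → K} {B X : Matrix (Fin m) (Fin n) K}
    (hX : X ∈ rowSet r B) (hne : X ≠ B) :
    ∃ u : Fin m → K, u ≠ 0 ∧ ∀ i j, X i j = u i * r j + B i j := by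
  obtain ⟨u, hu⟩ := hX
  refine ⟨u, ?_, hu⟩
  intro hc
  subst hc
  exact hne (by ext i j; rw [hu i j]; simp)

lemma colSet_eq_of_mem {c e : Fin m → K} {B X : Matrix (Fin m) (Fin n) K}
    (hc : c ≠ 0) (he : e ≠ 0) (hXc : X ∈ colSet c B) (hXe : X ∈ colSet e B)
    (hne : X ≠ B) : colSet e B = colSet c B := by
  obtain ⟨p, hp, hXp⟩ := decomp_of_mem_colSet hXc hne
  obtain ⟨g, hXg⟩ := hXe
  have h : ∀ i j, c i * p j = e i * g j := by
    intro i j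
    have h1 := hXp i j
    have h2 := hXg i j
    rw [h1] at h2
    exact add_right_cancel h2
  obtain ⟨⟨mu, hmu, hemu⟩, -⟩ := parallel h hc hp
  exact colSet_eq_of_parallel hmu hemu

lemma rowSet_eq_of_mem {r f : Fin n → K} {B X : Matrix (Fin m) (Fin n) K}
    (hr : r ≠ 0) (hf : f ≠ 0) (hXr : X ∈ rowSet r B) (hXf : X ∈ rowSet f B)
    (hne : X ≠ B) : rowSet f B = rowSet r B := by
  obtain ⟨u, hu, hXu⟩ := decomp_of_mem_rowSet hXr hne
  obtain ⟨w, hXw⟩ := hXf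
  have h : ∀ i j, u i * r j = w i * f j := by
    intro i j
    have h1 := hXu i j
    have h2 := hXw i j
    rw [h1] at h2
    exact add_right_cancel h2
  obtain ⟨-, ⟨la, hla, hfla⟩⟩ := parallel h hu hr
  exact rowSet_eq_of_parallel hla hfla

lemma clique_classification (hm0 : 0 < m) (S : Set (Matrix (Fin m) (Fin n) K))
    (B : Matrix (Fin m) (Fin n) K) (hB : B ∈ S)
    (hpair : ∀ X ∈ S, ∀ Y ∈ S, mrank (X - Y) ≤ 1) :
    (∃ c : Fin m → K, c ≠ 0 ∧ S ⊆ colSet c B) ∨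
    (∃ r : Fin n → K, r ≠ 0 ∧ S ⊆ rowSet r B) := by
  have hdec : ∀ X ∈ S, X ≠ B → ∃ (u : Fin m → K) (v : Fin n → K),
      u ≠ 0 ∧ v ≠ 0 ∧ ∀ i j, X i j = u i * v j + B i j := by
    intro X hX hne
    obtain ⟨u, v, hu, hv, huv⟩ := exists_nonzero_decomp (X - B) (hpair X hX B hB)
      (sub_ne_zero_of_ne hne)
    exact ⟨u, v, hu, hv, fun i j => by
      have := huv i j
      rw [Matrix.sub_apply] at this
      rw [← this]; noncomm_ring⟩
  by_cases htriv : ∀ X ∈ S, X = B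
  · left
    refine ⟨fun i => if i = ⟨0, hm0⟩ then 1 else 0, ?_, ?_⟩
    · intro hc
      have := congrFun hc ⟨0, hm0⟩
      simp at this
    · intro X hX
      rw [htriv X hX]
      exact self_mem_colSet _ _
  push_neg at htriv
  obtain ⟨X0, hX0S, hX0⟩ := htriv
  obtain ⟨u0, v0, hu0, hv0, h0⟩ := hdec X0 hX0S hX0
  by_cases hcol : ∀ X ∈ S, X ∈ colSet u0 B
  · exact Or.inl ⟨u0, hu0, hcol⟩
  push_neg at hcol
  obtain ⟨X1, hX1S, hX1⟩ := hcol
  have hX1B : X1 ≠ B := fun hc => hX1 (hc ▸ self_mem_colSet _ _)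
  obtain ⟨u1, v1, hu1, hv1, h1⟩ := hdec X1 hX1S hX1B
  -- adjacency of X1 and X0
  have hadj10 : (∃ mu : K, mu ≠ 0 ∧ ∀ i, u1 i = u0 i * mu) ∨
      (∃ la : K, la ≠ 0 ∧ ∀ j, v1 j = la * v0 j) := by
    apply rank_one_adjacent hu0 hv0 hu1 hv1
    have := hpair X0 hX0S X1 hX1S
    exact (mrank_congr (A' := X0 - X1)
      (fun i j => by rw [Matrix.sub_apply, h0 i j, h1 i j]; noncomm_ring)).trans_le this
  have hnotpar : ¬ ∃ mu : K, mu ≠ 0 ∧ ∀ i, u1 i = u0 i * mu := by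
    rintro ⟨mu, hmu, hpar⟩
    exact hX1 ⟨fun j => mu * v1 j, fun i j => by rw [h1 i j, hpar i, mul_assoc]⟩
  obtain ⟨la10, hla10, hv10⟩ := hadj10.resolve_left hnotpar
  right
  refine ⟨v0, hv0, ?_⟩
  intro X hXS
  by_cases hXB : X = B
  · rw [hXB]; exact self_mem_rowSet _ _
  obtain ⟨u, v, hu, hv, hX⟩ := hdec X hXS hXB
  have hadj0 : (∃ mu : K, mu ≠ 0 ∧ ∀ i, u i = u0 i * mu) ∨
      (∃ la : K, la ≠ 0 ∧ ∀ j, v j = la * v0 j) := by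
    apply rank_one_adjacent hu0 hv0 hu hv
    have := hpair X0 hX0S X hXS
    exact (mrank_congr (A' := X0 - X)
      (fun i j => by rw [Matrix.sub_apply, h0 i j, hX i j]; noncomm_ring)).trans_le this
  rcases hadj0 with ⟨mu, hmu, hpar⟩ | ⟨la, hla, hvla⟩
  · -- u parallel u0; then compare with X1
    have hadj1 : (∃ mu' : K, mu' ≠ 0 ∧ ∀ i, u i = u1 i * mu') ∨
        (∃ la' : K, la' ≠ 0 ∧ ∀ j, v j = la' * v1 j) := by
      apply rank_one_adjacent hu1 hv1 hu hv
      have := hpair X1 hX1S X hXS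
      exact (mrank_congr (A' := X1 - X)
        (fun i j => by rw [Matrix.sub_apply, h1 i j, hX i j]; noncomm_ring)).trans_le this
    rcases hadj1 with ⟨mu', hmu', hpar'⟩ | ⟨la', hla', hvla'⟩
    · exfalso
      apply hnotpar
      refine ⟨mu * mu'⁻¹, mul_ne_zero hmu (inv_ne_zero hmu'), fun i => ?_⟩
      have h1i := hpar i
      have h2i := hpar' i
      rw [h1i] at h2i
      have : u1 i = u0 i * mu * mu'⁻¹ := by
        rw [h2i, mul_assoc, mul_inv_cancel₀ hmu', mul_one]
      rw [this, mul_assoc]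
    · refine ⟨fun i => u i * (la' * la10), fun i j => ?_⟩
      rw [hX i j, hvla' j, hv10 j, ← mul_assoc, ← mul_assoc, mul_assoc (u i)]
  · exact ⟨fun i => u i * la, fun i j => by rw [hX i j, hvla j, ← mul_assoc]⟩



section Construction
variable {p : ℕ}

lemma sum_single (a : Fin p) (f : Fin p → K) (h : ∀ x, x ≠ a → f x = 0) :
    ∑ x, f x = f a :=
  Finset.sum_eq_single a (fun b _ hb => h b hb) (fun ha => absurd (Finset.mem_univ a) ha)

lemma sum_pair' (a b : Fin p) (hab : a ≠ b) (f : Fin p → K)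
    (h : ∀ x, x ≠ a → x ≠ b → f x = 0) :
    ∑ x, f x = f a + f b := by
  have hsub : ({a, b} : Finset (Fin p)) ⊆ Finset.univ := Finset.subset_univ _
  rw [← Finset.sum_subset hsub (fun x _ hx => by
    simp only [Finset.mem_insert, Finset.mem_singleton] at hx
    push_neg at hx
    exact h x hx.1 hx.2)]
  exact Finset.sum_pair hab

/-- Elementary matrix with column `z` equal to `d`, other columns standard. -/
def colE (z : Fin p) (d : Fin p → K) : Matrix (Fin p) (Fin p) K :=
  Matrix.of fun i k => if k = z then d i else if k = i then 1 else 0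

/-- Elementary matrix with row `z` equal to `d`, other rows standard. -/
def rowE (z : Fin p) (d : Fin p → K) : Matrix (Fin p) (Fin p) K :=
  Matrix.of fun i k => if i = z then d k else if k = i then 1 else 0

lemma colE_unit (z : Fin p) (d : Fin p → K) (hdz : d z ≠ 0) : IsUnit (colE z d) := by
  set F : Matrix (Fin p) (Fin p) K := Matrix.of (fun i k =>
    if k = z then (if i = z then (d z)⁻¹ else -(d i * (d z)⁻¹)) else if k = i then 1 else 0)
    with hFdef
  have hEF : colE z d * F = 1 := by
    ext i j
    rw [Matrix.mul_apply]
    have hvan : ∀ x, x ≠ z → x ≠ i → colE z d i x * F x j = 0 := by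
      intro x hx1 hx2
      have h0 : colE z d i x = 0 := by simp [colE, hx1, hx2]
      rw [h0, zero_mul]
    by_cases hiz : i = z
    · rw [sum_single i _ (fun x hx => hvan x (fun h => hx (h.trans hiz.symm)) hx)]
      have e1 : colE z d i i = d i := by simp [colE, hiz]
      by_cases hj : j = z
      · have f1 : F i j = (d z)⁻¹ := by simp [hFdef, hj, hiz]
        rw [e1, f1, hiz, mul_inv_cancel₀ hdz, hj, Matrix.one_apply_eq]
      · have f1 : F i j = 0 := by
          simp [hFdef, hj, show ¬ j = i from fun h => hj (h.trans hiz)]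
        rw [f1, mul_zero, Matrix.one_apply_ne (show i ≠ j from fun h => hj (h.symm.trans hiz))]
    · rw [sum_pair' z i (fun h => hiz h.symm) _ hvan]
      have e1 : colE z d i z = d i := by simp [colE]
      have e2 : colE z d i i = 1 := by simp [colE, hiz]
      by_cases hjz : j = z
      · have f1 : F z j = (d z)⁻¹ := by simp [hFdef, hjz]
        have f2 : F i j = -(d i * (d z)⁻¹) := by simp [hFdef, hjz, hiz]
        rw [e1, e2, f1, f2, one_mul, add_neg_cancel,
          Matrix.one_apply_ne (show i ≠ j from fun h => hiz (h.trans hjz))]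
      · have f1 : F z j = 0 := by simp [hFdef, hjz]
        have f2 : F i j = if j = i then 1 else 0 := by simp [hFdef, hjz]
        rw [e1, e2, f1, f2, mul_zero, zero_add, one_mul, Matrix.one_apply]
        by_cases hji : j = i
        · rw [if_pos hji, if_pos hji.symm]
        · rw [if_neg hji, if_neg (fun h => hji h.symm)]
  have hFE : F * colE z d = 1 := by
    ext i j
    rw [Matrix.mul_apply]
    have hvan : ∀ x, x ≠ z → x ≠ i → F i x * colE z d x j = 0 := by
      intro x hx1 hx2
      have h0 : F i x = 0 := by simp [hFdef, hx1, hx2]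
      rw [h0, zero_mul]
    by_cases hiz : i = z
    · rw [sum_single i _ (fun x hx => hvan x (fun h => hx (h.trans hiz.symm)) hx)]
      have f1 : F i i = (d z)⁻¹ := by simp [hFdef, hiz]
      by_cases hj : j = z
      · have e1 : colE z d i j = d z := by simp [colE, hj, hiz]
        have hij : i = j := hiz.trans hj.symm
        rw [f1, e1, inv_mul_cancel₀ hdz, hij, Matrix.one_apply_eq]
      · have e1 : colE z d i j = 0 := by
          simp [colE, hj, show ¬ j = i from fun h => hj (h.trans hiz)]
        rw [e1, mul_zero, Matrix.one_apply_ne (show i ≠ j from fun h => hj (h.symm.trans hiz))]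
    · rw [sum_pair' z i (fun h => hiz h.symm) _ hvan]
      have f1 : F i z = -(d i * (d z)⁻¹) := by simp [hFdef, hiz]
      have f2 : F i i = 1 := by simp [hFdef, hiz]
      by_cases hjz : j = z
      · have e1 : colE z d z j = d z := by simp [colE, hjz]
        have e2 : colE z d i j = d i := by simp [colE, hjz]
        rw [f1, f2, e1, e2, one_mul, neg_mul, mul_assoc, inv_mul_cancel₀ hdz, mul_one,
          neg_add_cancel, Matrix.one_apply_ne (show i ≠ j from fun h => hiz (h.trans hjz))]
      · have e1 : colE z d z j = 0 := by simp [colE, hjz]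
        have e2 : colE z d i j = if j = i then 1 else 0 := by simp [colE, hjz]
        rw [f1, f2, e1, e2, mul_zero, zero_add, one_mul, Matrix.one_apply]
        by_cases hji : j = i
        · rw [if_pos hji, if_pos hji.symm]
        · rw [if_neg hji, if_neg (fun h => hji h.symm)]
  exact ⟨⟨colE z d, F, hEF, hFE⟩, rfl⟩

lemma rowE_unit (z : Fin p) (d : Fin p → K) (hdz : d z ≠ 0) : IsUnit (rowE z d) := by
  set G : Matrix (Fin p) (Fin p) K := Matrix.of (fun i k =>
    if i = z then (if k = z then (d z)⁻¹ else -((d z)⁻¹ * d k)) else if k = i then 1 else 0)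
    with hGdef
  have hEG : rowE z d * G = 1 := by
    ext i j
    rw [Matrix.mul_apply]
    by_cases hiz : i = z
    · have hvan : ∀ x, x ≠ z → x ≠ j → rowE z d i x * G x j = 0 := by
        intro x hx1 hx2
        have h0 : G x j = 0 := by simp [hGdef, hx1, Ne.symm hx2]
        rw [h0, mul_zero]
      by_cases hjz : j = z
      · rw [sum_single z _ (fun x hx => hvan x hx (fun h => hx (h.trans hjz)))]
        have e1 : rowE z d i z = d z := by simp [rowE, hiz]
        have g1 : G z j = (d z)⁻¹ := by simp [hGdef, hjz]
        rw [e1, g1, mul_inv_cancel₀ hdz, hiz, hjz, Matrix.one_apply_eq]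
      · rw [sum_pair' z j (fun h => hjz h.symm) _ hvan]
        have e1 : rowE z d i z = d z := by simp [rowE, hiz]
        have e2 : rowE z d i j = d j := by simp [rowE, hiz]
        have g1 : G z j = -((d z)⁻¹ * d j) := by simp [hGdef, hjz]
        have g2 : G j j = 1 := by simp [hGdef, hjz]
        rw [e1, e2, g1, g2, mul_one, mul_neg, ← mul_assoc, mul_inv_cancel₀ hdz, one_mul,
          neg_add_cancel, Matrix.one_apply_ne (show i ≠ j from fun h => hjz (h.symm.trans hiz))]
    · have hvan : ∀ x, x ≠ i → rowE z d i x * G x j = 0 := by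
        intro x hx
        have h0 : rowE z d i x = 0 := by simp [rowE, hiz, hx]
        rw [h0, zero_mul]
      rw [sum_single i _ hvan]
      have e1 : rowE z d i i = 1 := by simp [rowE, hiz]
      have g1 : G i j = if j = i then 1 else 0 := by simp [hGdef, hiz]
      rw [e1, g1, one_mul, Matrix.one_apply]
      by_cases hji : j = i
      · rw [if_pos hji, if_pos hji.symm]
      · rw [if_neg hji, if_neg (fun h => hji h.symm)]
  have hGE : G * rowE z d = 1 := by
    ext i j
    rw [Matrix.mul_apply]
    by_cases hiz : i = z
    · have hvan : ∀ x, x ≠ z → x ≠ j → G i x * rowE z d x j = 0 := by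
        intro x hx1 hx2
        have h0 : rowE z d x j = 0 := by simp [rowE, hx1, Ne.symm hx2]
        rw [h0, mul_zero]
      by_cases hjz : j = z
      · rw [sum_single z _ (fun x hx => hvan x hx (fun h => hx (h.trans hjz)))]
        have g1 : G i z = (d z)⁻¹ := by simp [hGdef, hiz]
        have e1 : rowE z d z j = d j := by simp [rowE]
        rw [g1, e1, hjz, inv_mul_cancel₀ hdz, hiz, Matrix.one_apply_eq]
      · rw [sum_pair' z j (fun h => hjz h.symm) _ hvan]
        have g1 : G i z = (d z)⁻¹ := by simp [hGdef, hiz]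
        have g2 : G i j = -((d z)⁻¹ * d j) := by simp [hGdef, hiz, hjz]
        have e1 : rowE z d z j = d j := by simp [rowE]
        have e2 : rowE z d j j = 1 := by simp [rowE, hjz]
        rw [g1, g2, e1, e2, mul_one, add_neg_cancel,
          Matrix.one_apply_ne (show i ≠ j from fun h => hjz (h.symm.trans hiz))]
    · have hvan : ∀ x, x ≠ i → G i x * rowE z d x j = 0 := by
        intro x hx
        have h0 : G i x = 0 := by simp [hGdef, hiz, hx]
        rw [h0, zero_mul]
      rw [sum_single i _ hvan]
      have g1 : G i i = 1 := by simp [hGdef, hiz]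
      have e1 : rowE z d i j = if j = i then 1 else 0 := by simp [rowE, hiz]
      rw [g1, e1, one_mul, Matrix.one_apply]
      by_cases hji : j = i
      · rw [if_pos hji, if_pos hji.symm]
      · rw [if_neg hji, if_neg (fun h => hji h.symm)]
  exact ⟨⟨rowE z d, G, hEG, hGE⟩, rfl⟩


lemma perm_unit (σ : Equiv.Perm (Fin p)) :
    IsUnit (σ.toPEquiv.toMatrix : Matrix (Fin p) (Fin p) K) := by
  refine ⟨⟨σ.toPEquiv.toMatrix, σ.symm.toPEquiv.toMatrix, ?_, ?_⟩, rfl⟩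
  · rw [← PEquiv.toMatrix_trans, ← Equiv.toPEquiv_trans, Equiv.self_trans_symm,
      Equiv.toPEquiv_refl, PEquiv.toMatrix_refl]
  · rw [← PEquiv.toMatrix_trans, ← Equiv.toPEquiv_trans, Equiv.symm_trans_self,
      Equiv.toPEquiv_refl, PEquiv.toMatrix_refl]

/-- An invertible matrix with prescribed nonzero column `z`. -/
lemma exists_unit_col (z : Fin p) (c : Fin p → K) (hc : c ≠ 0) :
    ∃ P : Matrix (Fin p) (Fin p) K, IsUnit P ∧ ∀ i, P i z = c i := by
  obtain ⟨i0, hi0⟩ := (vec_ne_zero_iff c).1 hc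
  set σ : Equiv.Perm (Fin p) := Equiv.swap z i0 with hσ
  set d : Fin p → K := fun i => c (σ i) with hd
  have hdz : d z ≠ 0 := by
    rw [hd]
    simpa [hσ, Equiv.swap_apply_left] using hi0
  refine ⟨σ.toPEquiv.toMatrix * colE z d, (perm_unit σ).mul (colE_unit z d hdz), fun i => ?_⟩
  rw [PEquiv.toMatrix_toPEquiv_mul]
  have h1 : (colE z d).submatrix σ id i z = colE z d (σ i) z := rfl
  rw [h1]
  have h2 : colE z d (σ i) z = d (σ i) := by simp [colE]
  rw [h2, hd]
  simp only [hσ, Equiv.swap_apply_self]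

/-- An invertible matrix with prescribed nonzero row `z`. -/
lemma exists_unit_row (z : Fin p) (r : Fin p → K) (hr : r ≠ 0) :
    ∃ Q : Matrix (Fin p) (Fin p) K, IsUnit Q ∧ ∀ j, Q z j = r j := by
  obtain ⟨j0, hj0⟩ := (vec_ne_zero_iff r).1 hr
  set τ : Equiv.Perm (Fin p) := Equiv.swap z j0 with hτ
  set d : Fin p → K := fun j => r (τ j) with hd
  have hdz : d z ≠ 0 := by
    rw [hd]
    simpa [hτ, Equiv.swap_apply_left] using hj0
  refine ⟨rowE z d * τ.toPEquiv.toMatrix, (rowE_unit z d hdz).mul (perm_unit τ), fun j => ?_⟩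
  rw [PEquiv.mul_toMatrix_toPEquiv]
  have h1 : (rowE z d).submatrix id τ.symm z j = rowE z d z (τ.symm j) := rfl
  rw [h1]
  have h2 : rowE z d z (τ.symm j) = d (τ.symm j) := by simp [rowE]
  rw [h2, hd]
  exact congrArg r (τ.apply_symm_apply j)

end Construction

section MaximalSets

/-- The image of `M1set` under `X ↦ P X + A` is the column set of column 0 of `P`. -/
lemma image_M1_eq_colSet (hm0 : 0 < m) (P : Matrix (Fin m) (Fin m) K) (A : Matrix (Fin m) (Fin n) K) :
    (fun X => P * X + A) '' M1set K m n = colSet (fun i => P i ⟨0, hm0⟩) A := by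
  set z : Fin m := ⟨0, hm0⟩ with hz
  have hzval : ∀ k : Fin m, k ≠ z ↔ k.val ≠ 0 := by
    intro k
    constructor
    · intro h hv; exact h (Fin.ext hv)
    · intro hv h; exact hv (by rw [h])
  ext X
  constructor
  · rintro ⟨Z, hZ, rfl⟩
    refine ⟨fun j => Z z j, fun i j => ?_⟩
    have hsum : ∑ k, P i k * Z k j = P i z * Z z j := by
      apply sum_single
      intro x hx
      rw [hZ x j ((hzval x).1 hx), mul_zero]
    show (P * Z) i j + A i j = P i z * Z z j + A i j
    rw [Matrix.mul_apply, hsum]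
  · rintro ⟨x, hx⟩
    refine ⟨Matrix.of (fun k j => if k = z then x j else 0), ?_, ?_⟩
    · intro k j hk
      simp [Matrix.of_apply, fun h : k = z => ((hzval k).2 hk) h]
    · ext i j
      show (P * Matrix.of (fun k j => if k = z then x j else 0)) i j + A i j = X i j
      rw [Matrix.mul_apply]
      simp only [Matrix.of_apply]
      have hsum : ∑ k, P i k * (if k = z then x j else 0) = P i z * x j := by
        rw [sum_single z _ (fun y hy => by rw [if_neg hy, mul_zero]), if_pos rfl]
      rw [hsum, hx i j]

/-- The image of `N1set` under `X ↦ X Q + A` is the row set of row 0 of `Q`. -/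
lemma image_N1_eq_rowSet (hn0 : 0 < n) (Q : Matrix (Fin n) (Fin n) K) (A : Matrix (Fin m) (Fin n) K) :
    (fun X => X * Q + A) '' N1set K m n = rowSet (fun j => Q ⟨0, hn0⟩ j) A := by
  set z : Fin n := ⟨0, hn0⟩ with hz
  have hzval : ∀ k : Fin n, k ≠ z ↔ k.val ≠ 0 := by
    intro k
    constructor
    · intro h hv; exact h (Fin.ext hv)
    · intro hv h; exact hv (by rw [h])
  ext X
  constructor
  · rintro ⟨Z, hZ, rfl⟩
    refine ⟨fun i => Z i z, fun i j => ?_⟩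
    have hsum : ∑ k, Z i k * Q k j = Z i z * Q z j := by
      apply sum_single
      intro x hx
      rw [hZ i x ((hzval x).1 hx), zero_mul]
    show (Z * Q) i j + A i j = Z i z * Q z j + A i j
    rw [Matrix.mul_apply, hsum]
  · rintro ⟨u, hu⟩
    refine ⟨Matrix.of (fun i k => if k = z then u i else 0), ?_, ?_⟩
    · intro i k hk
      simp [Matrix.of_apply, fun h : k = z => ((hzval k).2 hk) h]
    · ext i j
      show (Matrix.of (fun i k => if k = z then u i else 0) * Q) i j + A i j = X i j
      rw [Matrix.mul_apply]
      simp only [Matrix.of_apply]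
      have hsum : ∑ k, (if k = z then u i else 0) * Q k j = u i * Q z j := by
        rw [sum_single z _ (fun y hy => by rw [if_neg hy, zero_mul]), if_pos rfl]
      rw [hsum, hu i j]

lemma colSet_recenter {c : Fin m → K} {A B : Matrix (Fin m) (Fin n) K}
    (hB : B ∈ colSet c A) : colSet c A = colSet c B := by
  obtain ⟨x0, hx0⟩ := hB
  ext X
  constructor
  · rintro ⟨x, hx⟩
    refine ⟨fun j => x j - x0 j, fun i j => ?_⟩
    rw [hx i j, hx0 i j]
    noncomm_ring
  · rintro ⟨x, hx⟩
    refine ⟨fun j => x j + x0 j, fun i j => ?_⟩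
    rw [hx i j, hx0 i j]
    noncomm_ring

lemma rowSet_recenter {r : Fin n → K} {A B : Matrix (Fin m) (Fin n) K}
    (hB : B ∈ rowSet r A) : rowSet r A = rowSet r B := by
  obtain ⟨u0, hu0⟩ := hB
  ext X
  constructor
  · rintro ⟨u, hu⟩
    refine ⟨fun i => u i - u0 i, fun i j => ?_⟩
    rw [hu i j, hu0 i j]
    noncomm_ring
  · rintro ⟨u, hu⟩
    refine ⟨fun i => u i + u0 i, fun i j => ?_⟩
    rw [hu i j, hu0 i j]
    noncomm_ring

/-- A column set is a maximal set of type one. -/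
lemma isTypeOne_colSet (hm0 : 0 < m) {c : Fin m → K} (hc : c ≠ 0) (B : Matrix (Fin m) (Fin n) K) :
    IsTypeOne (colSet c B) := by
  obtain ⟨P, hP, hPc⟩ := exists_unit_col (⟨0, hm0⟩ : Fin m) c hc
  refine ⟨P, B, hP, ?_⟩
  rw [image_M1_eq_colSet hm0 P B]
  have : (fun i => P i ⟨0, hm0⟩) = c := funext hPc
  rw [this]

/-- A row set is a maximal set of type two. -/
lemma isTypeTwo_rowSet (hn0 : 0 < n) {r : Fin n → K} (hr : r ≠ 0) (B : Matrix (Fin m) (Fin n) K) :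
    IsTypeTwo (rowSet r B) := by
  obtain ⟨Q, hQ, hQr⟩ := exists_unit_row (⟨0, hn0⟩ : Fin n) r hr
  refine ⟨Q, B, hQ, ?_⟩
  rw [image_N1_eq_rowSet hn0 Q B]
  have : (fun j => Q ⟨0, hn0⟩ j) = r := funext hQr
  rw [this]

/-- Any type-one maximal set containing `B` is a column set centred at `B`. -/
lemma typeOne_eq_colSet (hm0 : 0 < m) {M : Set (Matrix (Fin m) (Fin n) K)} (h : IsTypeOne M)
    {B : Matrix (Fin m) (Fin n) K} (hB : B ∈ M) :
    ∃ c : Fin m → K, c ≠ 0 ∧ M = colSet c B := by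
  obtain ⟨P, A, hP, rfl⟩ := h
  set z : Fin m := ⟨0, hm0⟩ with hz
  set c : Fin m → K := fun i => P i z with hc
  have hceq := image_M1_eq_colSet hm0 P A
  have hcne : c ≠ 0 := by
    intro h0
    obtain ⟨u, hu⟩ := hP
    have h1 : u.inv * P = 1 := by rw [← hu]; exact u.inv_mul
    have h2 : (u.inv * P) z z = 1 := by rw [h1, Matrix.one_apply_eq]
    rw [Matrix.mul_apply] at h2
    have h3 : ∀ k, u.inv z k * P k z = 0 := by
      intro k
      have : P k z = 0 := congrFun h0 k
      rw [this, mul_zero]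
    rw [Finset.sum_congr rfl (fun k _ => h3 k), Finset.sum_const_zero] at h2
    exact one_ne_zero h2.symm
  refine ⟨c, hcne, ?_⟩
  rw [hceq]
  exact colSet_recenter (hceq ▸ hB)

/-- Any type-two maximal set containing `B` is a row set centred at `B`. -/
lemma typeTwo_eq_rowSet (hn0 : 0 < n) {M : Set (Matrix (Fin m) (Fin n) K)} (h : IsTypeTwo M)
    {B : Matrix (Fin m) (Fin n) K} (hB : B ∈ M) :
    ∃ r : Fin n → K, r ≠ 0 ∧ M = rowSet r B := by
  obtain ⟨Q, A, hQ, rfl⟩ := h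
  set z : Fin n := ⟨0, hn0⟩ with hz
  set r : Fin n → K := fun j => Q z j with hr
  have hreq := image_N1_eq_rowSet hn0 Q A
  have hrne : r ≠ 0 := by
    intro h0
    obtain ⟨u, hu⟩ := hQ
    have h1 : Q * u.inv = 1 := by rw [← hu]; exact u.mul_inv
    have h2 : (Q * u.inv) z z = 1 := by rw [h1, Matrix.one_apply_eq]
    rw [Matrix.mul_apply] at h2
    have h3 : ∀ k, Q z k * u.inv k z = 0 := by
      intro k
      have : Q z k = 0 := congrFun h0 k
      rw [this, zero_mul]
    rw [Finset.sum_congr rfl (fun k _ => h3 k), Finset.sum_const_zero] at h2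
    exact one_ne_zero h2.symm
  refine ⟨r, hrne, ?_⟩
  rw [hreq]
  exact rowSet_recenter (hreq ▸ hB)

/-- A maximal set cannot be both of type one and type two when `m, n ≥ 2`. -/
lemma not_typeOne_and_typeTwo (hm2 : 2 ≤ m) (hn2 : 2 ≤ n)
    {M : Set (Matrix (Fin m) (Fin n) K)} (h1 : IsTypeOne M) (h2 : IsTypeTwo M) : False := by
  have hm0 : 0 < m := lt_of_lt_of_le Nat.zero_lt_two hm2
  have hn0 : 0 < n := lt_of_lt_of_le Nat.zero_lt_two hn2
  -- M is nonempty
  have h1c := h1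
  obtain ⟨P, A, hP, hMeq⟩ := h1c
  have hAmem : A ∈ M := by
    rw [hMeq]
    exact ⟨0, fun i j _ => rfl, by simp⟩
  obtain ⟨c, hc, hMc⟩ := typeOne_eq_colSet hm0 h1 hAmem
  obtain ⟨r, hrne, hMr⟩ := typeTwo_eq_rowSet hn0 h2 hAmem
  -- every c ⬝ x + A lies in rowSet r A
  have key : ∀ x : Fin n → K, x ≠ 0 → ∃ la : K, la ≠ 0 ∧ ∀ j, r j = la * x j := by
    intro x hx
    have hmem : Matrix.of (fun i j => c i * x j + A i j) ∈ colSet c A :=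
      ⟨x, fun i j => rfl⟩
    rw [← hMc, hMr] at hmem
    obtain ⟨w, hw⟩ := hmem
    have heq : ∀ i j, c i * x j = w i * r j := by
      intro i j
      have := hw i j
      simp only [Matrix.of_apply] at this
      exact add_right_cancel this
    exact (parallel heq hc hx).2
  have e0 : (fun j : Fin n => if j = ⟨0, hn0⟩ then (1:K) else 0) ≠ 0 := by
    intro hcon
    have := congrFun hcon ⟨0, hn0⟩
    simp at this
  have e1 : (fun j : Fin n => if j = ⟨1, hn2⟩ then (1:K) else 0) ≠ 0 := by
    intro hcon
    have := congrFun hcon ⟨1, hn2⟩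
    simp at this
  obtain ⟨la0, hla0, hr0⟩ := key _ e0
  obtain ⟨la1, hla1, hr1⟩ := key _ e1
  have hne01 : (⟨0, hn0⟩ : Fin n) ≠ ⟨1, hn2⟩ := by
    intro hcon
    have : (0 : ℕ) = 1 := congrArg Fin.val hcon
    simp at this
  have hv0 : r ⟨0, hn0⟩ = la0 := by rw [hr0 ⟨0, hn0⟩, if_pos rfl, mul_one]
  have hv1 : r ⟨0, hn0⟩ = 0 := by rw [hr1 ⟨0, hn0⟩, if_neg hne01, mul_zero]
  rw [hv1] at hv0
  exact hla0 hv0.symm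

end MaximalSets

section Hom
variable {D D' : Type} [DivisionRing D] [DivisionRing D'] {m n m' n' : ℕ}
variable (φ : Matrix (Fin m) (Fin n) D → Matrix (Fin m') (Fin n') D')

/-- Entries of an anchor matrix. -/
lemma anchor_sub_rank {a : Fin m → D} {v : Fin n → D} (B : Matrix (Fin m) (Fin n) D)
    (ha : a ≠ 0) (hv : v ≠ 0) :
    mrank (Matrix.of (fun i j => a i * v j + B i j) - B) = 1 := by
  apply mrank_eq_one_of _ a v
  · intro i j
    show Matrix.of (fun i j => a i * v j + B i j) i j - B i j = a i * v j
    simp [Matrix.of_apply]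
  · obtain ⟨i0, hi0⟩ := (vec_ne_zero_iff a).1 ha
    obtain ⟨j0, hj0⟩ := (vec_ne_zero_iff v).1 hv
    apply (matrix_ne_zero_iff _).2
    refine ⟨i0, j0, ?_⟩
    show Matrix.of (fun i j => a i * v j + B i j) i0 j0 - B i0 j0 ≠ 0
    simpa [Matrix.of_apply] using mul_ne_zero hi0 hj0

lemma anchor_ne {a : Fin m → D} {v : Fin n → D} (B : Matrix (Fin m) (Fin n) D)
    (ha : a ≠ 0) (hv : v ≠ 0) :
    Matrix.of (fun i j => a i * v j + B i j) ≠ B := by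
  intro hc
  have h1 := anchor_sub_rank B ha hv
  rw [hc, sub_self] at h1
  rw [(mrank_zero_iff (0 : Matrix (Fin m) (Fin n) D)).2 rfl] at h1
  exact one_ne_zero h1.symm

lemma phi_ne (hhom : ∀ X Y, mrank (X - Y) = 1 → mrank (φ X - φ Y) = 1)
    {X Y : Matrix (Fin m) (Fin n) D} (h : mrank (X - Y) = 1) : φ X ≠ φ Y := by
  intro hc
  have h1 := hhom X Y h
  rw [hc, sub_self, (mrank_zero_iff _).2 rfl] at h1
  exact one_ne_zero h1.symm

lemma mem_of_sub_eq {X B : Matrix (Fin m) (Fin n) D} {u : Fin m → D} {v : Fin n → D}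
    (huv : ∀ i j, (X - B) i j = u i * v j) : ∀ i j, X i j = u i * v j + B i j := by
  intro i j
  have h := huv i j
  rw [Matrix.sub_apply] at h
  exact eq_add_of_sub_eq h

/-- The image of a clique is contained in a column set or a row set through `φ B`. -/
lemma image_dichotomy (hhom : ∀ X Y, mrank (X - Y) = 1 → mrank (φ X - φ Y) = 1)
    (hm'0 : 0 < m') {S : Set (Matrix (Fin m) (Fin n) D)}
    {B : Matrix (Fin m) (Fin n) D} (hB : B ∈ S)
    (hclique : ∀ X ∈ S, ∀ Y ∈ S, X ≠ Y → mrank (X - Y) = 1) :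
    (∃ c : Fin m' → D', c ≠ 0 ∧ φ '' S ⊆ colSet c (φ B)) ∨
    (∃ r : Fin n' → D', r ≠ 0 ∧ φ '' S ⊆ rowSet r (φ B)) := by
  apply clique_classification hm'0 (φ '' S) (φ B) ⟨B, hB, rfl⟩
  rintro X' ⟨X, hX, rfl⟩ Y' ⟨Y, hY, rfl⟩
  by_cases hXY : X = Y
  · subst hXY
    rw [sub_self, (mrank_zero_iff _).2 rfl]
    omega
  · exact le_of_eq (hhom X Y (hclique X hX Y hY hXY))

/-- Degeneracy from two type-one source sets mapping to target sets of different types. -/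
lemma deg_of_two_colSets (hhom : ∀ X Y, mrank (X - Y) = 1 → mrank (φ X - φ Y) = 1)
    (hm'0 : 0 < m') (hn'0 : 0 < n')
    {B : Matrix (Fin m) (Fin n) D} (hBrank : mrank B ≤ 1)
    {a1 a2 : Fin m → D} (ha1 : a1 ≠ 0) (ha2 : a2 ≠ 0)
    {c : Fin m' → D'} {r : Fin n' → D'} (hc : c ≠ 0) (hr : r ≠ 0)
    (h1 : φ '' colSet a1 B ⊆ colSet c (φ B))
    (h2 : φ '' colSet a2 B ⊆ rowSet r (φ B)) :
    Degenerate φ := by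
  refine ⟨B, hBrank, colSet c (φ B), rowSet r (φ B), isTypeOne_colSet hm'0 hc _,
    isTypeTwo_rowSet hn'0 hr _, ⟨self_mem_colSet c _, self_mem_rowSet r _⟩, ?_⟩
  rintro Y ⟨X, hX, rfl⟩
  simp only [Set.mem_setOf_eq] at hX
  by_cases hXB : X = B
  · subst hXB
    exact Or.inl (self_mem_colSet c _)
  obtain ⟨u, v, hu, hv, huv⟩ := exists_nonzero_decomp (X - B) hX (sub_ne_zero_of_ne hXB)
  have hXmem : X ∈ rowSet v B := ⟨u, mem_of_sub_eq huv⟩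
  set Z1 : Matrix (Fin m) (Fin n) D := Matrix.of (fun i j => a1 i * v j + B i j) with hZ1def
  set Z2 : Matrix (Fin m) (Fin n) D := Matrix.of (fun i j => a2 i * v j + B i j) with hZ2def
  have hZ1R : Z1 ∈ rowSet v B := ⟨a1, fun i j => rfl⟩
  have hZ2R : Z2 ∈ rowSet v B := ⟨a2, fun i j => rfl⟩
  have hZ1c : Z1 ∈ colSet a1 B := ⟨v, fun i j => rfl⟩
  have hZ2c : Z2 ∈ colSet a2 B := ⟨v, fun i j => rfl⟩
  have hcl : ∀ X1 ∈ rowSet v B, ∀ Y1 ∈ rowSet v B, X1 ≠ Y1 → mrank (X1 - Y1) = 1 :=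
    fun X1 hX1 Y1 hY1 hne => rowSet_diff_rank_one hX1 hY1 hne
  rcases image_dichotomy φ hhom hm'0 (self_mem_rowSet v B) hcl with ⟨e, he, hsub⟩ | ⟨f, hf, hsub⟩
  · left
    have hφZ1e : φ Z1 ∈ colSet e (φ B) := hsub ⟨Z1, hZ1R, rfl⟩
    have hφZ1c : φ Z1 ∈ colSet c (φ B) := h1 ⟨Z1, hZ1c, rfl⟩
    have hφZ1ne : φ Z1 ≠ φ B := phi_ne φ hhom (anchor_sub_rank B ha1 hv)
    have heq := colSet_eq_of_mem hc he hφZ1c hφZ1e hφZ1ne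
    rw [← heq]
    exact hsub ⟨X, hXmem, rfl⟩
  · right
    have hφZ2f : φ Z2 ∈ rowSet f (φ B) := hsub ⟨Z2, hZ2R, rfl⟩
    have hφZ2r : φ Z2 ∈ rowSet r (φ B) := h2 ⟨Z2, hZ2c, rfl⟩
    have hφZ2ne : φ Z2 ≠ φ B := phi_ne φ hhom (anchor_sub_rank B ha2 hv)
    have heq := rowSet_eq_of_mem hr hf hφZ2r hφZ2f hφZ2ne
    rw [← heq]
    exact hsub ⟨X, hXmem, rfl⟩

/-- Degeneracy from two type-two source sets mapping to target sets of different types. -/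
lemma deg_of_two_rowSets (hhom : ∀ X Y, mrank (X - Y) = 1 → mrank (φ X - φ Y) = 1)
    (hm'0 : 0 < m') (hn'0 : 0 < n')
    {B : Matrix (Fin m) (Fin n) D} (hBrank : mrank B ≤ 1)
    {b1 b2 : Fin n → D} (hb1 : b1 ≠ 0) (hb2 : b2 ≠ 0)
    {c : Fin m' → D'} {r : Fin n' → D'} (hc : c ≠ 0) (hr : r ≠ 0)
    (h1 : φ '' rowSet b1 B ⊆ colSet c (φ B))
    (h2 : φ '' rowSet b2 B ⊆ rowSet r (φ B)) :
    Degenerate φ := by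
  refine ⟨B, hBrank, colSet c (φ B), rowSet r (φ B), isTypeOne_colSet hm'0 hc _,
    isTypeTwo_rowSet hn'0 hr _, ⟨self_mem_colSet c _, self_mem_rowSet r _⟩, ?_⟩
  rintro Y ⟨X, hX, rfl⟩
  simp only [Set.mem_setOf_eq] at hX
  by_cases hXB : X = B
  · subst hXB
    exact Or.inl (self_mem_colSet c _)
  obtain ⟨u, v, hu, hv, huv⟩ := exists_nonzero_decomp (X - B) hX (sub_ne_zero_of_ne hXB)
  have hXmem : X ∈ colSet u B := ⟨v, mem_of_sub_eq huv⟩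
  set W1 : Matrix (Fin m) (Fin n) D := Matrix.of (fun i j => u i * b1 j + B i j) with hW1def
  set W2 : Matrix (Fin m) (Fin n) D := Matrix.of (fun i j => u i * b2 j + B i j) with hW2def
  have hW1L : W1 ∈ colSet u B := ⟨b1, fun i j => rfl⟩
  have hW2L : W2 ∈ colSet u B := ⟨b2, fun i j => rfl⟩
  have hW1r : W1 ∈ rowSet b1 B := ⟨u, fun i j => rfl⟩
  have hW2r : W2 ∈ rowSet b2 B := ⟨u, fun i j => rfl⟩
  have hcl : ∀ X1 ∈ colSet u B, ∀ Y1 ∈ colSet u B, X1 ≠ Y1 → mrank (X1 - Y1) = 1 :=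
    fun X1 hX1 Y1 hY1 hne => colSet_diff_rank_one hX1 hY1 hne
  rcases image_dichotomy φ hhom hm'0 (self_mem_colSet u B) hcl with ⟨e, he, hsub⟩ | ⟨f, hf, hsub⟩
  · left
    have hφW1e : φ W1 ∈ colSet e (φ B) := hsub ⟨W1, hW1L, rfl⟩
    have hφW1c : φ W1 ∈ colSet c (φ B) := h1 ⟨W1, hW1r, rfl⟩
    have hφW1ne : φ W1 ≠ φ B := phi_ne φ hhom (anchor_sub_rank B hu hb1)
    have heq := colSet_eq_of_mem hc he hφW1c hφW1e hφW1ne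
    rw [← heq]
    exact hsub ⟨X, hXmem, rfl⟩
  · right
    have hφW2f : φ W2 ∈ rowSet f (φ B) := hsub ⟨W2, hW2L, rfl⟩
    have hφW2r : φ W2 ∈ rowSet r (φ B) := h2 ⟨W2, hW2r, rfl⟩
    have hφW2ne : φ W2 ≠ φ B := phi_ne φ hhom (anchor_sub_rank B hu hb2)
    have heq := rowSet_eq_of_mem hr hf hφW2r hφW2f hφW2ne
    rw [← heq]
    exact hsub ⟨X, hXmem, rfl⟩

/-- Degeneracy in the mixed case where both images lie in column sets. -/
lemma deg_mixed_col (hhom : ∀ X Y, mrank (X - Y) = 1 → mrank (φ X - φ Y) = 1)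
    (hm'0 : 0 < m') (hn'0 : 0 < n')
    {B : Matrix (Fin m) (Fin n) D} (hBrank : mrank B ≤ 1)
    {a : Fin m → D} {b : Fin n → D} (ha : a ≠ 0) (hb : b ≠ 0)
    {c c2 : Fin m' → D'} (hc : c ≠ 0) (hc2 : c2 ≠ 0)
    (h1 : φ '' colSet a B ⊆ colSet c (φ B))
    (h2 : φ '' rowSet b B ⊆ colSet c2 (φ B)) :
    Degenerate φ := by
  set T : Matrix (Fin m) (Fin n) D := Matrix.of (fun i j => a i * b j + B i j) with hTdef
  have hTa : T ∈ colSet a B := ⟨b, fun i j => rfl⟩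
  have hTb : T ∈ rowSet b B := ⟨a, fun i j => rfl⟩
  have hφTc : φ T ∈ colSet c (φ B) := h1 ⟨T, hTa, rfl⟩
  have hφTc2 : φ T ∈ colSet c2 (φ B) := h2 ⟨T, hTb, rfl⟩
  have hφTne : φ T ≠ φ B := phi_ne φ hhom (anchor_sub_rank B ha hb)
  have hcc : colSet c2 (φ B) = colSet c (φ B) := colSet_eq_of_mem hc hc2 hφTc hφTc2 hφTne
  by_cases hall : ∀ X, mrank (X - B) ≤ 1 → φ X ∈ colSet c (φ B)
  · have hr0 : (fun j : Fin n' => if j = ⟨0, hn'0⟩ then (1:D') else 0) ≠ 0 := by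
      intro hcon
      have := congrFun hcon ⟨0, hn'0⟩
      simp at this
    refine ⟨B, hBrank, colSet c (φ B), rowSet _ (φ B), isTypeOne_colSet hm'0 hc _,
      isTypeTwo_rowSet hn'0 hr0 _, ⟨self_mem_colSet c _, self_mem_rowSet _ _⟩, ?_⟩
    rintro Y ⟨X, hX, rfl⟩
    exact Or.inl (hall X hX)
  · push_neg at hall
    obtain ⟨X, hX, hφX⟩ := hall
    have hXB : X ≠ B := by
      rintro rfl
      exact hφX (self_mem_colSet c _)
    obtain ⟨u, v, hu, hv, huv⟩ := exists_nonzero_decomp (X - B) hX (sub_ne_zero_of_ne hXB)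
    have hXmem : X ∈ colSet u B := ⟨v, mem_of_sub_eq huv⟩
    set W : Matrix (Fin m) (Fin n) D := Matrix.of (fun i j => u i * b j + B i j) with hWdef
    have hWL : W ∈ colSet u B := ⟨b, fun i j => rfl⟩
    have hWr : W ∈ rowSet b B := ⟨u, fun i j => rfl⟩
    have hcl : ∀ X1 ∈ colSet u B, ∀ Y1 ∈ colSet u B, X1 ≠ Y1 → mrank (X1 - Y1) = 1 :=
      fun X1 hX1 Y1 hY1 hne => colSet_diff_rank_one hX1 hY1 hne
    rcases image_dichotomy φ hhom hm'0 (self_mem_colSet u B) hcl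
      with ⟨e, he, hsub⟩ | ⟨f, hf, hsub⟩
    · exfalso
      have hφWe : φ W ∈ colSet e (φ B) := hsub ⟨W, hWL, rfl⟩
      have hφWc2 : φ W ∈ colSet c2 (φ B) := h2 ⟨W, hWr, rfl⟩
      have hφWne : φ W ≠ φ B := phi_ne φ hhom (anchor_sub_rank B hu hb)
      have heq := colSet_eq_of_mem hc2 he hφWc2 hφWe hφWne
      apply hφX
      rw [← hcc, ← heq]
      exact hsub ⟨X, hXmem, rfl⟩
    · exact deg_of_two_colSets φ hhom hm'0 hn'0 hBrank ha hu hc hf h1 hsub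

/-- Degeneracy in the mixed case where both images lie in row sets. -/
lemma deg_mixed_row (hhom : ∀ X Y, mrank (X - Y) = 1 → mrank (φ X - φ Y) = 1)
    (hm'0 : 0 < m') (hn'0 : 0 < n')
    {B : Matrix (Fin m) (Fin n) D} (hBrank : mrank B ≤ 1)
    {a : Fin m → D} {b : Fin n → D} (ha : a ≠ 0) (hb : b ≠ 0)
    {r r2 : Fin n' → D'} (hr : r ≠ 0) (hr2 : r2 ≠ 0)
    (h1 : φ '' colSet a B ⊆ rowSet r (φ B))
    (h2 : φ '' rowSet b B ⊆ rowSet r2 (φ B)) :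
    Degenerate φ := by
  set T : Matrix (Fin m) (Fin n) D := Matrix.of (fun i j => a i * b j + B i j) with hTdef
  have hTa : T ∈ colSet a B := ⟨b, fun i j => rfl⟩
  have hTb : T ∈ rowSet b B := ⟨a, fun i j => rfl⟩
  have hφTr : φ T ∈ rowSet r (φ B) := h1 ⟨T, hTa, rfl⟩
  have hφTr2 : φ T ∈ rowSet r2 (φ B) := h2 ⟨T, hTb, rfl⟩
  have hφTne : φ T ≠ φ B := phi_ne φ hhom (anchor_sub_rank B ha hb)
  have hrr : rowSet r2 (φ B) = rowSet r (φ B) := rowSet_eq_of_mem hr hr2 hφTr hφTr2 hφTne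
  by_cases hall : ∀ X, mrank (X - B) ≤ 1 → φ X ∈ rowSet r (φ B)
  · have hc0 : (fun i : Fin m' => if i = ⟨0, hm'0⟩ then (1:D') else 0) ≠ 0 := by
      intro hcon
      have := congrFun hcon ⟨0, hm'0⟩
      simp at this
    refine ⟨B, hBrank, colSet _ (φ B), rowSet r (φ B), isTypeOne_colSet hm'0 hc0 _,
      isTypeTwo_rowSet hn'0 hr _, ⟨self_mem_colSet _ _, self_mem_rowSet r _⟩, ?_⟩
    rintro Y ⟨X, hX, rfl⟩
    exact Or.inr (hall X hX)
  · push_neg at hall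
    obtain ⟨X, hX, hφX⟩ := hall
    have hXB : X ≠ B := by
      rintro rfl
      exact hφX (self_mem_rowSet r _)
    obtain ⟨u, v, hu, hv, huv⟩ := exists_nonzero_decomp (X - B) hX (sub_ne_zero_of_ne hXB)
    have hXmem : X ∈ rowSet v B := ⟨u, mem_of_sub_eq huv⟩
    set Z : Matrix (Fin m) (Fin n) D := Matrix.of (fun i j => a i * v j + B i j) with hZdef
    have hZR : Z ∈ rowSet v B := ⟨a, fun i j => rfl⟩
    have hZa : Z ∈ colSet a B := ⟨v, fun i j => rfl⟩
    have hcl : ∀ X1 ∈ rowSet v B, ∀ Y1 ∈ rowSet v B, X1 ≠ Y1 → mrank (X1 - Y1) = 1 :=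
      fun X1 hX1 Y1 hY1 hne => rowSet_diff_rank_one hX1 hY1 hne
    rcases image_dichotomy φ hhom hm'0 (self_mem_rowSet v B) hcl
      with ⟨e, he, hsub⟩ | ⟨f, hf, hsub⟩
    · exact deg_of_two_rowSets φ hhom hm'0 hn'0 hBrank hv hb he hr2 hsub h2
    · exfalso
      have hφZf : φ Z ∈ rowSet f (φ B) := hsub ⟨Z, hZR, rfl⟩
      have hφZr : φ Z ∈ rowSet r (φ B) := h1 ⟨Z, hZa, rfl⟩
      have hφZne : φ Z ≠ φ B := phi_ne φ hhom (anchor_sub_rank B ha hv)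
      have heq := rowSet_eq_of_mem hr hf hφZr hφZf hφZne
      apply hφX
      rw [← heq]
      exact hsub ⟨X, hXmem, rfl⟩

end Hom
end Aux

/-- Lemma 3.7(b). -/
theorem nondegenerate_preserves_type_relation
    {D D' : Type} [DivisionRing D] [DivisionRing D'] {m n m' n' : ℕ}
    (hm : 2 ≤ m) (hn : 2 ≤ n) (hm' : 2 ≤ m') (hn' : 2 ≤ n')
    (φ : Matrix (Fin m) (Fin n) D → Matrix (Fin m') (Fin n') D')
    (hhom : ∀ X Y, mrank (X - Y) = 1 → mrank (φ X - φ Y) = 1)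
    (hnd : ¬ Degenerate φ) (h0 : φ 0 = 0)
    (M N : Set (Matrix (Fin m) (Fin n) D))
    (hMmax : IsMaximalSet M) (hNmax : IsMaximalSet N) (hMN : M ≠ N)
    (h0M : (0 : Matrix (Fin m) (Fin n) D) ∈ M) (hne : (M ∩ N).Nonempty) :
    ∃ M' N' : Set (Matrix (Fin m') (Fin n') D'),
      IsMaximalSet M' ∧ IsMaximalSet N' ∧ φ '' M ⊆ M' ∧ φ '' N ⊆ N' ∧
      (((IsTypeOne M ∧ IsTypeOne N) ∨ (IsTypeTwo M ∧ IsTypeTwo N)) →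
        ((IsTypeOne M' ∧ IsTypeOne N') ∨ (IsTypeTwo M' ∧ IsTypeTwo N'))) ∧
      (((IsTypeOne M ∧ IsTypeTwo N) ∨ (IsTypeTwo M ∧ IsTypeOne N)) →
        ((IsTypeOne M' ∧ IsTypeTwo N') ∨ (IsTypeTwo M' ∧ IsTypeOne N'))) := by
  classical
  obtain ⟨B, hBM, hBN⟩ := hne
  have hm0 : 0 < m := by omega
  have hn0 : 0 < n := by omega
  have hm'0 : 0 < m' := by omega
  have hn'0 : 0 < n' := by omega
  rcases hMmax with hM1 | hM2
  · obtain ⟨aM, haM, hMeq⟩ := Aux.typeOne_eq_colSet hm0 hM1 hBM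
    have hBrank : mrank B ≤ 1 := by
      have h0mem : (0 : Matrix (Fin m) (Fin n) D) ∈ Aux.colSet aM B := hMeq ▸ h0M
      obtain ⟨x0, hx0⟩ := h0mem
      apply Aux.mrank_le_one_of B aM (fun j => -(x0 j))
      intro i j
      have h := hx0 i j
      rw [Matrix.zero_apply] at h
      have hB : B i j = -(aM i * x0 j) := eq_neg_of_add_eq_zero_right h.symm
      rw [hB, mul_neg]
    have hdM := Aux.image_dichotomy φ hhom hm'0 (Aux.self_mem_colSet aM B)
      (fun X hX Y hY hxy => Aux.colSet_diff_rank_one hX hY hxy)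
    rcases hNmax with hN1 | hN2
    · -- both type one
      obtain ⟨aN, haN, hNeq⟩ := Aux.typeOne_eq_colSet hm0 hN1 hBN
      have hdN := Aux.image_dichotomy φ hhom hm'0 (Aux.self_mem_colSet aN B)
        (fun X hX Y hY hxy => Aux.colSet_diff_rank_one hX hY hxy)
      rcases hdM with ⟨c, hc, hMc⟩ | ⟨r, hr, hMr⟩
      · rcases hdN with ⟨c2, hc2, hNc⟩ | ⟨r2, hr2, hNr⟩
        · refine ⟨Aux.colSet c (φ B), Aux.colSet c2 (φ B),
            Or.inl (Aux.isTypeOne_colSet hm'0 hc _), Or.inl (Aux.isTypeOne_colSet hm'0 hc2 _),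
            by rw [hMeq]; exact hMc, by rw [hNeq]; exact hNc,
            fun _ => Or.inl ⟨Aux.isTypeOne_colSet hm'0 hc _, Aux.isTypeOne_colSet hm'0 hc2 _⟩,
            fun h => ?_⟩
          exfalso
          rcases h with ⟨_, h2⟩ | ⟨h2, _⟩
          · exact Aux.not_typeOne_and_typeTwo hm hn hN1 h2
          · exact Aux.not_typeOne_and_typeTwo hm hn hM1 h2
        · exact ((hnd (Aux.deg_of_two_colSets φ hhom hm'0 hn'0 hBrank haM haN hc hr2
            hMc hNr))).elim
      · rcases hdN with ⟨c2, hc2, hNc⟩ | ⟨r2, hr2, hNr⟩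
        · exact ((hnd (Aux.deg_of_two_colSets φ hhom hm'0 hn'0 hBrank haN haM hc2 hr
            hNc hMr))).elim
        · refine ⟨Aux.rowSet r (φ B), Aux.rowSet r2 (φ B),
            Or.inr (Aux.isTypeTwo_rowSet hn'0 hr _), Or.inr (Aux.isTypeTwo_rowSet hn'0 hr2 _),
            by rw [hMeq]; exact hMr, by rw [hNeq]; exact hNr,
            fun _ => Or.inr ⟨Aux.isTypeTwo_rowSet hn'0 hr _, Aux.isTypeTwo_rowSet hn'0 hr2 _⟩,
            fun h => ?_⟩
          exfalso
          rcases h with ⟨_, h2⟩ | ⟨h2, _⟩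
          · exact Aux.not_typeOne_and_typeTwo hm hn hN1 h2
          · exact Aux.not_typeOne_and_typeTwo hm hn hM1 h2
    · -- M type one, N type two
      obtain ⟨bN, hbN, hNeq⟩ := Aux.typeTwo_eq_rowSet hn0 hN2 hBN
      have hdN := Aux.image_dichotomy φ hhom hm'0 (Aux.self_mem_rowSet bN B)
        (fun X hX Y hY hxy => Aux.rowSet_diff_rank_one hX hY hxy)
      rcases hdM with ⟨c, hc, hMc⟩ | ⟨r, hr, hMr⟩
      · rcases hdN with ⟨c2, hc2, hNc⟩ | ⟨r2, hr2, hNr⟩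
        · exact ((hnd (Aux.deg_mixed_col φ hhom hm'0 hn'0 hBrank haM hbN hc hc2
            hMc hNc))).elim
        · refine ⟨Aux.colSet c (φ B), Aux.rowSet r2 (φ B),
            Or.inl (Aux.isTypeOne_colSet hm'0 hc _), Or.inr (Aux.isTypeTwo_rowSet hn'0 hr2 _),
            by rw [hMeq]; exact hMc, by rw [hNeq]; exact hNr,
            fun h => ?_,
            fun _ => Or.inl ⟨Aux.isTypeOne_colSet hm'0 hc _, Aux.isTypeTwo_rowSet hn'0 hr2 _⟩⟩
          exfalso
          rcases h with ⟨_, h2⟩ | ⟨h2, _⟩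
          · exact Aux.not_typeOne_and_typeTwo hm hn h2 hN2
          · exact Aux.not_typeOne_and_typeTwo hm hn hM1 h2
      · rcases hdN with ⟨c2, hc2, hNc⟩ | ⟨r2, hr2, hNr⟩
        · refine ⟨Aux.rowSet r (φ B), Aux.colSet c2 (φ B),
            Or.inr (Aux.isTypeTwo_rowSet hn'0 hr _), Or.inl (Aux.isTypeOne_colSet hm'0 hc2 _),
            by rw [hMeq]; exact hMr, by rw [hNeq]; exact hNc,
            fun h => ?_,
            fun _ => Or.inr ⟨Aux.isTypeTwo_rowSet hn'0 hr _, Aux.isTypeOne_colSet hm'0 hc2 _⟩⟩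
          exfalso
          rcases h with ⟨_, h2⟩ | ⟨h2, _⟩
          · exact Aux.not_typeOne_and_typeTwo hm hn h2 hN2
          · exact Aux.not_typeOne_and_typeTwo hm hn hM1 h2
        · exact ((hnd (Aux.deg_mixed_row φ hhom hm'0 hn'0 hBrank haM hbN hr hr2
            hMr hNr))).elim
  · obtain ⟨bM, hbM, hMeq⟩ := Aux.typeTwo_eq_rowSet hn0 hM2 hBM
    have hBrank : mrank B ≤ 1 := by
      have h0mem : (0 : Matrix (Fin m) (Fin n) D) ∈ Aux.rowSet bM B := hMeq ▸ h0M
      obtain ⟨u0, hu0⟩ := h0mem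
      apply Aux.mrank_le_one_of B (fun i => -(u0 i)) bM
      intro i j
      have h := hu0 i j
      rw [Matrix.zero_apply] at h
      have hB : B i j = -(u0 i * bM j) := eq_neg_of_add_eq_zero_right h.symm
      rw [hB, neg_mul]
    have hdM := Aux.image_dichotomy φ hhom hm'0 (Aux.self_mem_rowSet bM B)
      (fun X hX Y hY hxy => Aux.rowSet_diff_rank_one hX hY hxy)
    rcases hNmax with hN1 | hN2
    · -- M type two, N type one
      obtain ⟨aN, haN, hNeq⟩ := Aux.typeOne_eq_colSet hm0 hN1 hBN
      have hdN := Aux.image_dichotomy φ hhom hm'0 (Aux.self_mem_colSet aN B)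
        (fun X hX Y hY hxy => Aux.colSet_diff_rank_one hX hY hxy)
      rcases hdM with ⟨c, hc, hMc⟩ | ⟨r, hr, hMr⟩
      · rcases hdN with ⟨c2, hc2, hNc⟩ | ⟨r2, hr2, hNr⟩
        · exact ((hnd (Aux.deg_mixed_col φ hhom hm'0 hn'0 hBrank haN hbM hc2 hc
            hNc hMc))).elim
        · refine ⟨Aux.colSet c (φ B), Aux.rowSet r2 (φ B),
            Or.inl (Aux.isTypeOne_colSet hm'0 hc _), Or.inr (Aux.isTypeTwo_rowSet hn'0 hr2 _),
            by rw [hMeq]; exact hMc, by rw [hNeq]; exact hNr,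
            fun h => ?_,
            fun _ => Or.inl ⟨Aux.isTypeOne_colSet hm'0 hc _, Aux.isTypeTwo_rowSet hn'0 hr2 _⟩⟩
          exfalso
          rcases h with ⟨h2, _⟩ | ⟨_, h2⟩
          · exact Aux.not_typeOne_and_typeTwo hm hn h2 hM2
          · exact Aux.not_typeOne_and_typeTwo hm hn hN1 h2
      · rcases hdN with ⟨c2, hc2, hNc⟩ | ⟨r2, hr2, hNr⟩
        · refine ⟨Aux.rowSet r (φ B), Aux.colSet c2 (φ B),
            Or.inr (Aux.isTypeTwo_rowSet hn'0 hr _), Or.inl (Aux.isTypeOne_colSet hm'0 hc2 _),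
            by rw [hMeq]; exact hMr, by rw [hNeq]; exact hNc,
            fun h => ?_,
            fun _ => Or.inr ⟨Aux.isTypeTwo_rowSet hn'0 hr _, Aux.isTypeOne_colSet hm'0 hc2 _⟩⟩
          exfalso
          rcases h with ⟨h2, _⟩ | ⟨_, h2⟩
          · exact Aux.not_typeOne_and_typeTwo hm hn h2 hM2
          · exact Aux.not_typeOne_and_typeTwo hm hn hN1 h2
        · exact ((hnd (Aux.deg_mixed_row φ hhom hm'0 hn'0 hBrank haN hbM hr2 hr
            hNr hMr))).elim
    · -- both type two
      obtain ⟨bN, hbN, hNeq⟩ := Aux.typeTwo_eq_rowSet hn0 hN2 hBN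
      have hdN := Aux.image_dichotomy φ hhom hm'0 (Aux.self_mem_rowSet bN B)
        (fun X hX Y hY hxy => Aux.rowSet_diff_rank_one hX hY hxy)
      rcases hdM with ⟨c, hc, hMc⟩ | ⟨r, hr, hMr⟩
      · rcases hdN with ⟨c2, hc2, hNc⟩ | ⟨r2, hr2, hNr⟩
        · refine ⟨Aux.colSet c (φ B), Aux.colSet c2 (φ B),
            Or.inl (Aux.isTypeOne_colSet hm'0 hc _), Or.inl (Aux.isTypeOne_colSet hm'0 hc2 _),
            by rw [hMeq]; exact hMc, by rw [hNeq]; exact hNc,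
            fun _ => Or.inl ⟨Aux.isTypeOne_colSet hm'0 hc _, Aux.isTypeOne_colSet hm'0 hc2 _⟩,
            fun h => ?_⟩
          exfalso
          rcases h with ⟨h2, _⟩ | ⟨_, h2⟩
          · exact Aux.not_typeOne_and_typeTwo hm hn h2 hM2
          · exact Aux.not_typeOne_and_typeTwo hm hn h2 hN2
        · exact ((hnd (Aux.deg_of_two_rowSets φ hhom hm'0 hn'0 hBrank hbM hbN hc hr2
            hMc hNr))).elim
      · rcases hdN with ⟨c2, hc2, hNc⟩ | ⟨r2, hr2, hNr⟩
        · exact ((hnd (Aux.deg_of_two_rowSets φ hhom hm'0 hn'0 hBrank hbN hbM hc2 hr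
            hNc hMr))).elim
        · refine ⟨Aux.rowSet r (φ B), Aux.rowSet r2 (φ B),
            Or.inr (Aux.isTypeTwo_rowSet hn'0 hr _), Or.inr (Aux.isTypeTwo_rowSet hn'0 hr2 _),
            by rw [hMeq]; exact hMr, by rw [hNeq]; exact hNr,
            fun _ => Or.inr ⟨Aux.isTypeTwo_rowSet hn'0 hr _, Aux.isTypeTwo_rowSet hn'0 hr2 _⟩,
            fun h => ?_⟩
          exfalso
          rcases h with ⟨h2, _⟩ | ⟨_, h2⟩
          · exact Aux.not_typeOne_and_typeTwo hm hn h2 hM2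
          · exact Aux.not_typeOne_and_typeTwo hm hn h2 hN2
end

section
/- Let D and D' be division rings, m, n, m', n' ≥ 2, and let φ: D^{m×n} → D'^{m'×n'} be a non-degenerate graph homomorphism with φ(0) = 0. Suppose M is a maximal set containing 0 in D^{m×n} and φ(M) ⊆ M' for some maximal set M' in D'^{m'×n'}. Then M' is the unique maximal set containing φ(M), and φ(M) is not contained in any line of M'. -/
open Matrix

namespace Aux

variable {D : Type} [DivisionRing D] {m n : ℕ}

def outer (c : Fin m → D) (r : Fin n → D) : Matrix (Fin m) (Fin n) D :=
  fun i j => c i * r j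

lemma outer_row (c : Fin m → D) (r : Fin n → D) (i : Fin m) :
    (fun j => outer c r i j) = c i • r := by
  funext j; simp [outer]

lemma outer_zero_left (r : Fin n → D) : outer (0 : Fin m → D) r = 0 := by
  funext i j; simp [outer]

lemma outer_zero_right (c : Fin m → D) : outer c (0 : Fin n → D) = 0 := by
  funext i j; simp [outer]

lemma mrank_zero : mrank (0 : Matrix (Fin m) (Fin n) D) = 0 := by
  have h : Submodule.span D (Set.range fun i : Fin m => fun j : Fin n =>
      (0 : Matrix (Fin m) (Fin n) D) i j) = ⊥ := by
    rw [Submodule.span_eq_bot]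
    rintro x ⟨i, rfl⟩
    funext j; simp
  rw [mrank, h, finrank_bot]

/-- If the span of the range of `f` has dimension at most one and `f i0 ≠ 0`,
then every `f i` is a multiple of `f i0`. -/
lemma span_struct {N : Type} [AddCommGroup N] [Module D N] {k : ℕ} (f : Fin k → N)
    (h : Module.finrank D (Submodule.span D (Set.range f)) ≤ 1)
    {i0 : Fin k} (h0 : f i0 ≠ 0) (i : Fin k) : ∃ lam : D, f i = lam • f i0 := by
  have hfd : FiniteDimensional D (Submodule.span D (Set.range f)) :=
    FiniteDimensional.span_of_finite D (Set.finite_range f)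
  have hle : Submodule.span D {f i0} ≤ Submodule.span D (Set.range f) :=
    Submodule.span_mono (Set.singleton_subset_iff.mpr ⟨i0, rfl⟩)
  have h1 : Module.finrank D (Submodule.span D {f i0}) = 1 := finrank_span_singleton h0
  have heq : Submodule.span D {f i0} = Submodule.span D (Set.range f) := by
    apply Submodule.eq_of_le_of_finrank_le hle
    omega
  have hmem : f i ∈ Submodule.span D {f i0} := by
    rw [heq]; exact Submodule.subset_span ⟨i, rfl⟩
  obtain ⟨lam, hlam⟩ := Submodule.mem_span_singleton.mp hmem
  exact ⟨lam, hlam.symm⟩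

lemma mrank_outer_le_one (c : Fin m → D) (r : Fin n → D) : mrank (outer c r) ≤ 1 := by
  have hle : Submodule.span D (Set.range fun i : Fin m => fun j : Fin n => outer c r i j)
      ≤ Submodule.span D {r} := by
    rw [Submodule.span_le]
    rintro x ⟨i, rfl⟩
    exact Submodule.smul_mem _ (c i) (Submodule.mem_span_singleton_self r)
  have : Module.finrank D (Submodule.span D {r}) ≤ 1 := by
    rcases eq_or_ne r 0 with hr | hr
    · rw [hr, Submodule.span_zero_singleton, finrank_bot]
      omega
    · rw [finrank_span_singleton hr]
  calc mrank (outer c r) ≤ Module.finrank D (Submodule.span D {r}) :=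
        Submodule.finrank_mono hle
    _ ≤ 1 := this

lemma mrank_outer_eq_one {c : Fin m → D} {r : Fin n → D} (hc : c ≠ 0) (hr : r ≠ 0) :
    mrank (outer c r) = 1 := by
  obtain ⟨i0, hi0⟩ : ∃ i, c i ≠ 0 := by
    by_contra h; push_neg at h; exact hc (funext h)
  have heq : Submodule.span D (Set.range fun i : Fin m => fun j : Fin n => outer c r i j)
      = Submodule.span D {r} := by
    apply le_antisymm
    · rw [Submodule.span_le]
      rintro x ⟨i, rfl⟩
      exact Submodule.smul_mem _ (c i) (Submodule.mem_span_singleton_self r)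
    · rw [Submodule.span_le, Set.singleton_subset_iff]
      have hmem : (c i0 • r : Fin n → D) ∈ Submodule.span D
          (Set.range fun i : Fin m => fun j : Fin n => outer c r i j) :=
        Submodule.subset_span ⟨i0, rfl⟩
      have hmem2 := Submodule.smul_mem _ ((c i0)⁻¹) hmem
      rwa [smul_smul, inv_mul_cancel₀ hi0, one_smul] at hmem2
  rw [mrank, heq, finrank_span_singleton hr]

lemma exists_outer {A : Matrix (Fin m) (Fin n) D} (h : mrank A ≤ 1) :
    ∃ c r, A = outer c r := by
  rcases eq_or_ne A 0 with rfl | hA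
  · exact ⟨0, 0, (outer_zero_left 0).symm⟩
  · obtain ⟨i0, hi0⟩ : ∃ i, (fun j => A i j) ≠ 0 := by
      by_contra hc; push_neg at hc
      apply hA; funext i j
      have := congrFun (hc i) j; simpa using this
    have key := span_struct (fun i : Fin m => fun j : Fin n => A i j) h hi0
    choose lam hlam using key
    refine ⟨lam, fun j => A i0 j, ?_⟩
    funext i j
    have := congrFun (hlam i) j
    simpa [outer] using this

lemma outer_ne_zero_parts {c : Fin m → D} {r : Fin n → D} (h : outer c r ≠ 0) :
    c ≠ 0 ∧ r ≠ 0 := by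
  constructor
  · rintro rfl; exact h (outer_zero_left r)
  · rintro rfl; exact h (outer_zero_right c)

end Aux

namespace Aux

variable {D : Type} [DivisionRing D] {m n : ℕ}

def Cset (c : Fin m → D) : Set (Matrix (Fin m) (Fin n) D) := {A | ∃ r, A = outer c r}

def Rset (r : Fin n → D) : Set (Matrix (Fin m) (Fin n) D) := {A | ∃ t, A = outer t r}

lemma mul_m1 (hm : 0 < m) (P : Matrix (Fin m) (Fin m) D) {Z : Matrix (Fin m) (Fin n) D}
    (hZ : Z ∈ M1set D m n) :
    P * Z = outer (fun i => P i ⟨0, hm⟩) (fun j => Z ⟨0, hm⟩ j) := by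
  funext i j
  rw [Matrix.mul_apply]
  rw [Finset.sum_eq_single (⟨0, hm⟩ : Fin m)]
  · rfl
  · intro k _ hk
    have : k.val ≠ 0 := fun h => hk (Fin.ext h)
    rw [hZ k j this, mul_zero]
  · intro h; exact absurd (Finset.mem_univ _) h

lemma m1_mul (hn : 0 < n) (Q : Matrix (Fin n) (Fin n) D) {Z : Matrix (Fin m) (Fin n) D}
    (hZ : Z ∈ N1set D m n) :
    Z * Q = outer (fun i => Z i ⟨0, hn⟩) (fun j => Q ⟨0, hn⟩ j) := by
  funext i j
  rw [Matrix.mul_apply]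
  rw [Finset.sum_eq_single (⟨0, hn⟩ : Fin n)]
  · rfl
  · intro k _ hk
    have : k.val ≠ 0 := fun h => hk (Fin.ext h)
    rw [hZ i k this, zero_mul]
  · intro h; exact absurd (Finset.mem_univ _) h

lemma M1set_sub {X Y : Matrix (Fin m) (Fin n) D} (hX : X ∈ M1set D m n)
    (hY : Y ∈ M1set D m n) : X - Y ∈ M1set D m n := by
  intro i j h
  simp [Matrix.sub_apply, hX i j h, hY i j h]

lemma N1set_sub {X Y : Matrix (Fin m) (Fin n) D} (hX : X ∈ N1set D m n)
    (hY : Y ∈ N1set D m n) : X - Y ∈ N1set D m n := by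
  intro i j h
  simp [Matrix.sub_apply, hX i j h, hY i j h]

lemma typeOne_struct (hm : 0 < m) {S : Set (Matrix (Fin m) (Fin n) D)}
    (h1 : IsTypeOne S) (h0 : (0 : Matrix (Fin m) (Fin n) D) ∈ S) :
    ∃ c : Fin m → D, c ≠ 0 ∧ S = Cset c := by
  obtain ⟨P, A, hP, rfl⟩ := h1
  obtain ⟨X0, hX0, hX0eq⟩ := h0
  simp only at hX0eq
  have hA : A = -(P * X0) := eq_neg_of_add_eq_zero_right hX0eq
  set i0 : Fin m := ⟨0, hm⟩
  refine ⟨fun i => P i i0, ?_, ?_⟩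
  · intro hc
    obtain ⟨u, hu⟩ := hP
    have hinv : (u⁻¹ : (Matrix (Fin m) (Fin m) D)ˣ).val * P = 1 := by
      rw [← hu]; exact u.inv_mul
    have h1' := congrFun (congrFun hinv i0) i0
    rw [Matrix.mul_apply] at h1'
    have : ∀ k, P k i0 = 0 := fun k => congrFun hc k
    simp only [Matrix.one_apply_eq] at h1'
    rw [Finset.sum_eq_zero (fun k _ => by rw [this k, mul_zero])] at h1'
    exact one_ne_zero h1'.symm
  · ext B
    constructor
    · rintro ⟨X, hX, rfl⟩
      simp only
      have : P * X + A = P * (X - X0) := by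
        rw [hA, Matrix.mul_sub, sub_eq_add_neg]
      rw [this, mul_m1 hm P (M1set_sub hX hX0)]
      exact ⟨_, rfl⟩
    · rintro ⟨r, rfl⟩
      set Z : Matrix (Fin m) (Fin n) D := fun k j => if (k : ℕ) = 0 then r j else 0 with hZdef
      have hZ : Z ∈ M1set D m n := by intro i j h; simp [hZdef, h]
      refine ⟨Z + X0, ?_, ?_⟩
      · intro i j h; simp [Matrix.add_apply, hZ i j h, hX0 i j h]
      · simp only
        rw [hA, Matrix.mul_add]
        have : P * Z + P * X0 + -(P * X0) = P * Z := add_neg_cancel_right _ _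
        rw [this, mul_m1 hm P hZ]
        have hrow : (fun j => Z ⟨0, hm⟩ j) = r := by funext j; simp [hZdef]
        rw [hrow]

lemma typeTwo_struct (hn : 0 < n) {S : Set (Matrix (Fin m) (Fin n) D)}
    (h2 : IsTypeTwo S) (h0 : (0 : Matrix (Fin m) (Fin n) D) ∈ S) :
    ∃ r : Fin n → D, r ≠ 0 ∧ S = Rset r := by
  obtain ⟨Q, A, hQ, rfl⟩ := h2
  obtain ⟨X0, hX0, hX0eq⟩ := h0
  simp only at hX0eq
  have hA : A = -(X0 * Q) := eq_neg_of_add_eq_zero_right hX0eq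
  set j0 : Fin n := ⟨0, hn⟩
  refine ⟨fun j => Q j0 j, ?_, ?_⟩
  · intro hr
    obtain ⟨u, hu⟩ := hQ
    have hinv : Q * (u⁻¹ : (Matrix (Fin n) (Fin n) D)ˣ).val = 1 := by
      rw [← hu]; exact u.mul_inv
    have h1' := congrFun (congrFun hinv j0) j0
    rw [Matrix.mul_apply] at h1'
    have : ∀ k, Q j0 k = 0 := fun k => congrFun hr k
    simp only [Matrix.one_apply_eq] at h1'
    rw [Finset.sum_eq_zero (fun k _ => by rw [this k, zero_mul])] at h1'
    exact one_ne_zero h1'.symm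
  · ext B
    constructor
    · rintro ⟨X, hX, rfl⟩
      simp only
      have : X * Q + A = (X - X0) * Q := by
        rw [hA, Matrix.sub_mul, sub_eq_add_neg]
      rw [this, m1_mul hn Q (N1set_sub hX hX0)]
      exact ⟨_, rfl⟩
    · rintro ⟨t, rfl⟩
      set Z : Matrix (Fin m) (Fin n) D := fun i k => if (k : ℕ) = 0 then t i else 0 with hZdef
      have hZ : Z ∈ N1set D m n := by intro i j h; simp [hZdef, h]
      refine ⟨Z + X0, ?_, ?_⟩
      · intro i j h; simp [Matrix.add_apply, hZ i j h, hX0 i j h]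
      · simp only
        rw [hA, Matrix.add_mul]
        have : Z * Q + X0 * Q + -(X0 * Q) = Z * Q := add_neg_cancel_right _ _
        rw [this, m1_mul hn Q hZ]
        have hcol : (fun i => Z i ⟨0, hn⟩) = t := by funext i; simp [hZdef]
        rw [hcol]

end Aux

namespace Aux

variable {D : Type} [DivisionRing D] {m n : ℕ}

lemma Cset_eq {c1 c2 : Fin m → D} {s1 s2 : Fin n → D}
    (h : outer c1 s1 = outer c2 s2) (hne : outer c1 s1 ≠ 0) :
    (Cset c1 : Set (Matrix (Fin m) (Fin n) D)) = Cset c2 := by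
  obtain ⟨hc1, hs1⟩ := outer_ne_zero_parts hne
  have hne2 : outer c2 s2 ≠ 0 := h ▸ hne
  obtain ⟨hc2, hs2⟩ := outer_ne_zero_parts hne2
  obtain ⟨j, hj⟩ : ∃ j, s1 j ≠ 0 := by
    by_contra hcon; push_neg at hcon; exact hs1 (funext hcon)
  have key : ∀ i, c1 i = c2 i * (s2 j * (s1 j)⁻¹) := by
    intro i
    have := congrFun (congrFun h i) j
    simp only [outer] at this
    rw [← mul_assoc, ← this, mul_assoc, mul_inv_cancel₀ hj, mul_one]
  set μ : D := s2 j * (s1 j)⁻¹ with hμ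
  have hμ0 : μ ≠ 0 := by
    obtain ⟨i1, hi1⟩ : ∃ i, c1 i ≠ 0 := by
      by_contra hcon; push_neg at hcon; exact hc1 (funext hcon)
    intro h0
    apply hi1
    rw [key i1, h0, mul_zero]
  ext B
  constructor
  · rintro ⟨r, rfl⟩
    refine ⟨fun j' => μ * r j', ?_⟩
    funext i j'
    simp only [outer, key i, mul_assoc]
  · rintro ⟨r, rfl⟩
    refine ⟨fun j' => μ⁻¹ * r j', ?_⟩
    funext i j'
    have : c2 i = c1 i * μ⁻¹ := by
      rw [key i, mul_assoc, mul_inv_cancel₀ hμ0, mul_one]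
    simp only [outer, this, mul_assoc]

lemma Rset_eq {t1 t2 : Fin m → D} {r1 r2 : Fin n → D}
    (h : outer t1 r1 = outer t2 r2) (hne : outer t1 r1 ≠ 0) :
    (Rset r1 : Set (Matrix (Fin m) (Fin n) D)) = Rset r2 := by
  obtain ⟨ht1, hr1⟩ := outer_ne_zero_parts hne
  have hne2 : outer t2 r2 ≠ 0 := h ▸ hne
  obtain ⟨ht2, hr2⟩ := outer_ne_zero_parts hne2
  obtain ⟨i, hi⟩ : ∃ i, t1 i ≠ 0 := by
    by_contra hcon; push_neg at hcon; exact ht1 (funext hcon)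
  have key : ∀ j, r1 j = ((t1 i)⁻¹ * t2 i) * r2 j := by
    intro j
    have := congrFun (congrFun h i) j
    simp only [outer] at this
    rw [mul_assoc, ← this, ← mul_assoc, inv_mul_cancel₀ hi, one_mul]
  set lam : D := (t1 i)⁻¹ * t2 i with hlam
  have hlam0 : lam ≠ 0 := by
    obtain ⟨j1, hj1⟩ : ∃ j, r1 j ≠ 0 := by
      by_contra hcon; push_neg at hcon; exact hr1 (funext hcon)
    intro h0
    apply hj1
    rw [key j1, h0, zero_mul]
  ext B
  constructor
  · rintro ⟨t, rfl⟩
    refine ⟨fun i' => t i' * lam, ?_⟩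
    funext i' j'
    simp only [outer, key j', mul_assoc]
  · rintro ⟨t, rfl⟩
    refine ⟨fun i' => t i' * lam⁻¹, ?_⟩
    funext i' j'
    have : r2 j' = lam⁻¹ * r1 j' := by
      rw [key j', ← mul_assoc, inv_mul_cancel₀ hlam0, one_mul]
    simp only [outer, this, mul_assoc]

lemma indep {s v : Fin n → D} (hs : s ≠ 0) (hvs : ∀ lam : D, v ≠ lam • s)
    {a b : D} (h : a • v = b • s) : a = 0 ∧ b = 0 := by
  have ha : a = 0 := by
    by_contra ha
    apply hvs (a⁻¹ * b)
    rw [← smul_smul, ← h, smul_smul, inv_mul_cancel₀ ha, one_smul]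
  subst ha
  refine ⟨rfl, ?_⟩
  by_contra hb
  apply hs
  have : (b⁻¹ : D) • (b • s) = b⁻¹ • ((0 : D) • v) := by rw [h]
  rwa [smul_smul, inv_mul_cancel₀ hb, one_smul, zero_smul, smul_zero] at this

lemma keyD {c u : Fin m → D} {s v : Fin n → D} (hc : c ≠ 0) (hs : s ≠ 0)
    (hvs : ∀ lam : D, v ≠ lam • s)
    (hrk : mrank (outer u v - outer c s) ≤ 1) :
    ∃ μ : D, u = fun i => c i * μ := by
  set f : Fin m → (Fin n → D) := fun i => u i • v - c i • s with hf
  have hfrows : (fun i : Fin m => fun j : Fin n => (outer u v - outer c s) i j) = f := by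
    funext i j
    simp [hf, outer, Matrix.sub_apply, Pi.smul_apply, smul_eq_mul]
  rw [mrank, hfrows] at hrk
  obtain ⟨i0, hi0⟩ : ∃ i, c i ≠ 0 := by
    by_contra hcon; push_neg at hcon; exact hc (funext hcon)
  have hfi0 : f i0 ≠ 0 := by
    intro h0
    have : u i0 • v = c i0 • s := by
      have := sub_eq_zero.mp h0
      exact this
    exact hi0 (indep hs hvs this).2
  have key := fun i => span_struct f hrk hfi0 i
  refine ⟨(c i0)⁻¹ * u i0, ?_⟩
  funext i
  obtain ⟨lam, hlam⟩ := key i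
  have heq : (u i - lam * u i0) • v = (c i - lam * c i0) • s := by
    have h2 : u i • v - c i • s = (lam * u i0) • v - (lam * c i0) • s := by
      rw [hf] at hlam
      simp only at hlam
      rw [hlam, smul_sub, smul_smul, smul_smul]
    rw [sub_smul, sub_smul]
    rw [sub_eq_sub_iff_sub_eq_sub] at h2
    exact h2
  obtain ⟨h3, h4⟩ := indep hs hvs heq
  have hu : u i = lam * u i0 := sub_eq_zero.mp h3
  have hcc : c i = lam * c i0 := sub_eq_zero.mp h4
  have hlam' : lam = c i * (c i0)⁻¹ := by
    rw [hcc, mul_assoc, mul_inv_cancel₀ hi0, mul_one]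
  rw [hu, hlam', mul_assoc]

end Aux

namespace Aux

variable {D : Type} [DivisionRing D] {m n : ℕ}

lemma exists_rank_one_mem (hm : 0 < m) (hn : 0 < n) {M : Set (Matrix (Fin m) (Fin n) D)}
    (hMmax : IsMaximalSet M) (h0M : (0 : Matrix (Fin m) (Fin n) D) ∈ M) :
    ∃ Y ∈ M, mrank Y = 1 := by
  have honeN : (fun _ : Fin n => (1 : D)) ≠ 0 := fun h => one_ne_zero (congrFun h ⟨0, hn⟩)
  have honeM : (fun _ : Fin m => (1 : D)) ≠ 0 := fun h => one_ne_zero (congrFun h ⟨0, hm⟩)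
  rcases hMmax with h1 | h2
  · obtain ⟨c, hc, hMEq⟩ := typeOne_struct hm h1 h0M
    exact ⟨outer c (fun _ => 1), by rw [hMEq]; exact ⟨_, rfl⟩, mrank_outer_eq_one hc honeN⟩
  · obtain ⟨r, hr, hMEq⟩ := typeTwo_struct hn h2 h0M
    exact ⟨outer (fun _ => 1) r, by rw [hMEq]; exact ⟨_, rfl⟩, mrank_outer_eq_one honeM hr⟩

lemma core {D D' : Type} [DivisionRing D] [DivisionRing D'] {m n m' n' : ℕ}
    (hm : 0 < m) (hn : 0 < n) (hm' : 0 < m') (hn' : 0 < n')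
    (φ : Matrix (Fin m) (Fin n) D → Matrix (Fin m') (Fin n') D')
    (hhom : ∀ X Y, mrank (X - Y) = 1 → mrank (φ X - φ Y) = 1)
    (h0 : φ 0 = 0)
    (M : Set (Matrix (Fin m) (Fin n) D)) (hMmax : IsMaximalSet M)
    (h0M : (0 : Matrix (Fin m) (Fin n) D) ∈ M)
    (Ms Ns : Set (Matrix (Fin m') (Fin n') D'))
    (hMs : IsTypeOne Ms) (hNs : IsTypeTwo Ns)
    (h1 : φ '' M ⊆ Ms) (h2 : φ '' M ⊆ Ns) : Degenerate φ := by
  have h0img : φ 0 ∈ φ '' M := ⟨0, h0M, rfl⟩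
  have h0Ms : (0 : Matrix (Fin m') (Fin n') D') ∈ Ms := h0 ▸ h1 h0img
  have h0Ns : (0 : Matrix (Fin m') (Fin n') D') ∈ Ns := h0 ▸ h2 h0img
  obtain ⟨c'', hc'', hMsEq⟩ := typeOne_struct hm' hMs h0Ms
  obtain ⟨r'', hr'', hNsEq⟩ := typeTwo_struct hn' hNs h0Ns
  refine ⟨0, by rw [mrank_zero]; exact Nat.zero_le 1, Ms, Ns, hMs, hNs, ⟨h1 h0img, h2 h0img⟩, ?_⟩
  rintro _ ⟨X, hX, rfl⟩
  simp only [Set.mem_setOf_eq, sub_zero] at hX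
  by_cases hXM : X ∈ M
  · exact Or.inl (h1 ⟨X, hXM, rfl⟩)
  obtain ⟨a, b, rfl⟩ := exists_outer hX
  have hX0 : outer a b ≠ 0 := fun h => hXM (h ▸ h0M)
  obtain ⟨ha, hb⟩ := outer_ne_zero_parts hX0
  obtain ⟨Y, hYM, hXY, hY1⟩ : ∃ Y, Y ∈ M ∧ mrank (outer a b - Y) = 1 ∧ mrank Y = 1 := by
    rcases hMmax with hM1 | hM2
    · obtain ⟨c, hc, hMEq⟩ := typeOne_struct hm hM1 h0M
      refine ⟨outer c b, by rw [hMEq]; exact ⟨b, rfl⟩, ?_, mrank_outer_eq_one hc hb⟩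
      have hdiff : outer a b - outer c b = outer (a - c) b := by
        funext i j; simp [outer, Matrix.sub_apply, sub_mul]
      rw [hdiff]
      refine mrank_outer_eq_one ?_ hb
      intro hac
      exact hXM (by rw [hMEq, sub_eq_zero.mp hac]; exact ⟨b, rfl⟩)
    · obtain ⟨ρ, hρ, hMEq⟩ := typeTwo_struct hn hM2 h0M
      refine ⟨outer a ρ, by rw [hMEq]; exact ⟨a, rfl⟩, ?_, mrank_outer_eq_one ha hρ⟩
      have hdiff : outer a b - outer a ρ = outer a (b - ρ) := by
        funext i j; simp [outer, Matrix.sub_apply, mul_sub]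
      rw [hdiff]
      refine mrank_outer_eq_one ha ?_
      intro hbr
      exact hXM (by rw [hMEq, sub_eq_zero.mp hbr]; exact ⟨a, rfl⟩)
  have hφY : mrank (φ Y) = 1 := by
    have := hhom Y 0 (by rw [sub_zero]; exact hY1)
    rwa [h0, sub_zero] at this
  have hφYne : φ Y ≠ 0 := by
    intro h; rw [h, mrank_zero] at hφY; exact one_ne_zero hφY.symm
  obtain ⟨s, hφYs⟩ : ∃ s, φ Y = outer c'' s := by
    have := h1 ⟨Y, hYM, rfl⟩; rwa [hMsEq] at this
  obtain ⟨t, hφYt⟩ : ∃ t, φ Y = outer t r'' := by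
    have := h2 ⟨Y, hYM, rfl⟩; rwa [hNsEq] at this
  have hne : outer c'' s ≠ 0 := by rw [← hφYs]; exact hφYne
  have hRseteq : (Rset s : Set (Matrix (Fin m') (Fin n') D')) = Rset r'' :=
    Rset_eq (by rw [← hφYs]; exact hφYt) hne
  have hX1 : mrank (outer a b) = 1 := mrank_outer_eq_one ha hb
  have hφX : mrank (φ (outer a b)) = 1 := by
    have := hhom (outer a b) 0 (by rw [sub_zero]; exact hX1)
    rwa [h0, sub_zero] at this
  obtain ⟨u, v, hφXuv⟩ := exists_outer (le_of_eq hφX)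
  have hdiff1 : mrank (φ (outer a b) - φ Y) = 1 := hhom _ _ hXY
  by_cases hv : ∃ lam : D', v = lam • s
  · obtain ⟨lam, rfl⟩ := hv
    refine Or.inr ?_
    rw [hNsEq, ← hRseteq]
    refine ⟨fun i => u i * lam, ?_⟩
    rw [hφXuv]; funext i j
    simp only [outer, Pi.smul_apply, smul_eq_mul, mul_assoc]
  · push_neg at hv
    have hs0 : s ≠ 0 := (outer_ne_zero_parts hne).2
    have hrk : mrank (outer u v - outer c'' s) ≤ 1 := by
      rw [← hφXuv, ← hφYs]; exact le_of_eq hdiff1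
    obtain ⟨μ, hμ⟩ := keyD hc'' hs0 hv hrk
    refine Or.inl ?_
    rw [hMsEq]
    refine ⟨fun j => μ * v j, ?_⟩
    rw [hφXuv]; funext i j
    simp only [outer]
    rw [congrFun hμ i, mul_assoc]

end Aux

/-- Lemma 3.7(c): `M'` is the unique maximal set containing `φ(M)`, and `φ(M)` is not contained
in any line of `M'` (a line of `M'` being `M' ∩ N'` for a maximal set `N'` of the other type
meeting `M'`). -/
theorem nondegenerate_image_unique_maximal_set_and_no_line
    {D D' : Type} [DivisionRing D] [DivisionRing D'] {m n m' n' : ℕ}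
    (hm : 2 ≤ m) (hn : 2 ≤ n) (hm' : 2 ≤ m') (hn' : 2 ≤ n')
    (φ : Matrix (Fin m) (Fin n) D → Matrix (Fin m') (Fin n') D')
    (hhom : ∀ X Y, mrank (X - Y) = 1 → mrank (φ X - φ Y) = 1)
    (hnd : ¬ Degenerate φ) (h0 : φ 0 = 0)
    (M : Set (Matrix (Fin m) (Fin n) D)) (hMmax : IsMaximalSet M)
    (h0M : (0 : Matrix (Fin m) (Fin n) D) ∈ M)
    (M' : Set (Matrix (Fin m') (Fin n') D')) (hM'max : IsMaximalSet M')
    (hφM : φ '' M ⊆ M') :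
    (∀ S : Set (Matrix (Fin m') (Fin n') D'), IsMaximalSet S → φ '' M ⊆ S → S = M') ∧
    (∀ N' : Set (Matrix (Fin m') (Fin n') D'), IsMaximalSet N' →
      ((IsTypeOne M' ∧ IsTypeTwo N') ∨ (IsTypeTwo M' ∧ IsTypeOne N')) →
      (M' ∩ N').Nonempty → ¬ φ '' M ⊆ M' ∩ N') := by
  have hm0 : 0 < m := by omega
  have hn0 : 0 < n := by omega
  have hm'0 : 0 < m' := by omega
  have hn'0 : 0 < n' := by omega
  have h0img : (0 : Matrix (Fin m') (Fin n') D') ∈ φ '' M := ⟨0, h0M, h0⟩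
  constructor
  · intro S hSmax hS
    have h0S : (0 : Matrix (Fin m') (Fin n') D') ∈ S := hS h0img
    have h0M' : (0 : Matrix (Fin m') (Fin n') D') ∈ M' := hφM h0img
    obtain ⟨Y, hYM, hY1⟩ := Aux.exists_rank_one_mem hm0 hn0 hMmax h0M
    have hφY : mrank (φ Y) = 1 := by
      have := hhom Y 0 (by rw [sub_zero]; exact hY1)
      rwa [h0, sub_zero] at this
    have hφYne : φ Y ≠ 0 := by
      intro h; rw [h, Aux.mrank_zero] at hφY; exact one_ne_zero hφY.symm
    have hφYS : φ Y ∈ S := hS ⟨Y, hYM, rfl⟩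
    have hφYM' : φ Y ∈ M' := hφM ⟨Y, hYM, rfl⟩
    rcases hSmax with hS1 | hS2 <;> rcases hM'max with hM1 | hM2
    · obtain ⟨c1, hc1, hSEq⟩ := Aux.typeOne_struct hm'0 hS1 h0S
      obtain ⟨c2, hc2, hM'Eq⟩ := Aux.typeOne_struct hm'0 hM1 h0M'
      obtain ⟨s1, hs1⟩ : ∃ s1, φ Y = Aux.outer c1 s1 := by rwa [hSEq] at hφYS
      obtain ⟨s2, hs2⟩ : ∃ s2, φ Y = Aux.outer c2 s2 := by rwa [hM'Eq] at hφYM'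
      rw [hSEq, hM'Eq]
      exact Aux.Cset_eq (by rw [← hs1]; exact hs2) (by rw [← hs1]; exact hφYne)
    · exact absurd (Aux.core hm0 hn0 hm'0 hn'0 φ hhom h0 M hMmax h0M S M' hS1 hM2 hS hφM) hnd
    · exact absurd (Aux.core hm0 hn0 hm'0 hn'0 φ hhom h0 M hMmax h0M M' S hM1 hS2 hφM hS) hnd
    · obtain ⟨r1, hr1, hSEq⟩ := Aux.typeTwo_struct hn'0 hS2 h0S
      obtain ⟨r2, hr2, hM'Eq⟩ := Aux.typeTwo_struct hn'0 hM2 h0M'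
      obtain ⟨t1, ht1⟩ : ∃ t1, φ Y = Aux.outer t1 r1 := by rwa [hSEq] at hφYS
      obtain ⟨t2, ht2⟩ : ∃ t2, φ Y = Aux.outer t2 r2 := by rwa [hM'Eq] at hφYM'
      rw [hSEq, hM'Eq]
      exact Aux.Rset_eq (by rw [← ht1]; exact ht2) (by rw [← ht1]; exact hφYne)
  · intro N' hN'max htypes hne' hsub
    have hsubM' : φ '' M ⊆ M' := fun x hx => (hsub hx).1
    have hsubN' : φ '' M ⊆ N' := fun x hx => (hsub hx).2
    rcases htypes with ⟨hM1, hN2⟩ | ⟨hM2, hN1⟩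
    · exact hnd (Aux.core hm0 hn0 hm'0 hn'0 φ hhom h0 M hMmax h0M M' N' hM1 hN2 hsubM' hsubN')
    · exact hnd (Aux.core hm0 hn0 hm'0 hn'0 φ hhom h0 M hMmax h0M N' M' hN1 hM2 hsubN' hsubM')
end

section
/- Let E ⊆ D be division rings with |E| > 2, and let m, n, k, r be integers with m ≥ k > r ≥ 1 and n > r. Let A ∈ M_{k,r}(E^{m×n}), let X ∈ D^{m×m} and Y ∈ D^{m×n} with rank of the m×(m+n) block matrix (X, Y) equal to m, and suppose that for every B ∈ M_{k,r+1}(E^{m×n}) with rank(B − A) = 1, the 2m×(m+n) block matrix with rows (X, Y) and (I_m, B) has rank m + 1. Then X is invertible and Y = XA. -/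
open Matrix

/-- Rank of a matrix over a division ring: dimension of the left row space. -/
noncomputable def mrank' {D : Type} [DivisionRing D] {ι κ : Type} (A : Matrix ι κ D) : ℕ :=
  Module.finrank D (Submodule.span D (Set.range fun i : ι => fun j : κ => A i j))

/-- Membership in `M_{k,r}(E^{m×n})`: all entries lie in the division subring `E`, the rank is
`r`, and there are exactly `k` nonzero rows. -/
def MemMkr {D : Type} [DivisionRing D] (E : Subring D) {m n : ℕ} (k r : ℕ)
    (A : Matrix (Fin m) (Fin n) D) : Prop :=
  (∀ i j, A i j ∈ E) ∧ mrank' A = r ∧ {i | ∃ j, A i j ≠ 0}.ncard = k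

set_option linter.unusedSectionVars false

namespace GrassmannAux
open Submodule Module

variable {D : Type} [DivisionRing D]

def op {p q : ℕ} (u : Fin p → D) (v : Fin q → D) : Matrix (Fin p) (Fin q) D :=
  Matrix.of fun i j => u i * v j

lemma op_row {p q : ℕ} (u : Fin p → D) (v : Fin q → D) (i : Fin p) :
    op u v i = u i • v := by
  funext j; simp [op, Pi.smul_apply, smul_eq_mul]

lemma mrank'_eq {ι κ : Type} (M : Matrix ι κ D) :
    mrank' M = finrank D (span D (Set.range (M : ι → κ → D))) := rfl

lemma vecMul_mem_span {p q : ℕ} (M : Matrix (Fin p) (Fin q) D) (c : Fin p → D) :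
    c ᵥ* M ∈ span D (Set.range (M : Fin p → Fin q → D)) := by
  show c ᵥ* M ∈ span D (Set.range M.row)
  rw [← range_vecMulLinear]; exact ⟨c, rfl⟩

lemma finrank_sup_of_inf_bot {V : Type} [AddCommGroup V] [Module D V] [FiniteDimensional D V]
    (p q : Submodule D V) (h : p ⊓ q = ⊥) :
    finrank D ↥(p ⊔ q) = finrank D ↥p + finrank D ↥q := by
  have := Submodule.finrank_sup_add_finrank_inf_eq p q
  rw [h] at this; simpa using this

lemma finrank_sup_span_singleton {V : Type} [AddCommGroup V] [Module D V] [FiniteDimensional D V]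
    (p : Submodule D V) {v : V} (hv : v ∉ p) :
    finrank D ↥(p ⊔ span D {v}) = finrank D ↥p + 1 := by
  have hv0 : v ≠ 0 := fun h => hv (h ▸ p.zero_mem)
  rw [finrank_sup_of_inf_bot p (span D {v}), finrank_span_singleton hv0]
  rw [eq_bot_iff]
  rintro x ⟨hxp, hxs⟩
  obtain ⟨c, rfl⟩ := mem_span_singleton.mp hxs
  rcases eq_or_ne c 0 with rfl | hc
  · simp
  · have : c⁻¹ • c • v ∈ p := p.smul_mem c⁻¹ hxp
    rw [smul_smul, inv_mul_cancel₀ hc, one_smul] at this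
    exact absurd this hv

lemma mrank'_op_eq_one {p q : ℕ} {u : Fin p → D} {v : Fin q → D}
    (hu : u ≠ 0) (hv : v ≠ 0) : mrank' (op u v) = 1 := by
  obtain ⟨i₀, hi₀⟩ : ∃ i, u i ≠ 0 := by
    by_contra hc; push_neg at hc; exact hu (funext hc)
  have hspan : span D (Set.range (op u v : Fin p → Fin q → D)) = span D {v} := by
    apply le_antisymm
    · rw [span_le]; rintro x ⟨i, rfl⟩
      rw [op_row]; exact smul_mem _ _ (subset_span rfl)
    · rw [span_le, Set.singleton_subset_iff]
      have : (u i₀)⁻¹ • (op u v i₀) ∈ span D (Set.range (op u v : Fin p → Fin q → D)) :=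
        smul_mem _ _ (subset_span ⟨i₀, rfl⟩)
      rwa [op_row, smul_smul, inv_mul_cancel₀ hi₀, one_smul] at this
  rw [mrank'_eq, hspan, finrank_span_singleton hv]

/-- Lemma A: the perturbed matrix is admissible. -/
lemma memMkr_pert {m n k r : ℕ} (E : Subring D) (A : Matrix (Fin m) (Fin n) D)
    (hAE : ∀ i j, A i j ∈ E) (hrank : mrank' A = r) (hcard : {i | ∃ j, A i j ≠ 0}.ncard = k)
    (u : Fin m → D) (v : Fin n → D) (huE : ∀ i, u i ∈ E) (hvE : ∀ j, v j ∈ E)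
    (hsupp : ∀ i, u i ≠ 0 → ∃ j, A i j ≠ 0)
    (c : Fin m → D) (hc : c ᵥ* A = 0) (hcu : c ⬝ᵥ u ≠ 0)
    (hv : v ∉ span D (Set.range (A : Fin m → Fin n → D))) :
    MemMkr E k (r + 1) (A + op u v) ∧ mrank' ((A + op u v) - A) = 1 := by
  have hv0 : v ≠ 0 := fun h => hv (h ▸ zero_mem _)
  have hu0 : u ≠ 0 := by
    rintro rfl
    simp [dotProduct] at hcu
  set B := A + op u v with hB
  have hBrow : ∀ i, (B i : Fin n → D) = A i + u i • v := by
    intro i; funext j; simp [hB, op, Matrix.add_apply, Pi.smul_apply, smul_eq_mul]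
  constructor
  · refine ⟨?_, ?_, ?_⟩
    · intro i j
      exact E.add_mem (hAE i j) (E.mul_mem (huE i) (hvE j))
    · -- rank of B is r + 1
      have hle : span D (Set.range (B : Fin m → Fin n → D)) ≤
          span D (Set.range (A : Fin m → Fin n → D)) ⊔ span D {v} := by
        rw [span_le]
        rintro x ⟨i, rfl⟩
        rw [show (B : Fin m → Fin n → D) i = A i + u i • v from hBrow i]
        refine add_mem (le_sup_left (a := span D (Set.range (A : Fin m → Fin n → D))) (subset_span ⟨i, rfl⟩)) (le_sup_right (b := span D {v}) (smul_mem _ _ (subset_span rfl)))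
      have hvB : v ∈ span D (Set.range (B : Fin m → Fin n → D)) := by
        have h1 : c ᵥ* B = (c ⬝ᵥ u) • v := by
          funext j
          simp only [hB, Matrix.vecMul_add]
          rw [show c ᵥ* A = 0 from hc]
          simp only [Pi.add_apply, Pi.zero_apply, zero_add, Pi.smul_apply, smul_eq_mul]
          simp [Matrix.vecMul, dotProduct, op, Finset.sum_mul, mul_assoc]
        have h2 := vecMul_mem_span B c
        rw [h1] at h2
        have := smul_mem (span D (Set.range (B : Fin m → Fin n → D))) (c ⬝ᵥ u)⁻¹ h2
        rwa [smul_smul, inv_mul_cancel₀ hcu, one_smul] at this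
      have hge : span D (Set.range (A : Fin m → Fin n → D)) ⊔ span D {v} ≤
          span D (Set.range (B : Fin m → Fin n → D)) := by
        refine sup_le ?_ ?_
        · rw [span_le]
          rintro x ⟨i, rfl⟩
          have : (A : Fin m → Fin n → D) i = B i - u i • v := by
            rw [hBrow i]; abel
          rw [this]
          exact sub_mem (subset_span ⟨i, rfl⟩) (smul_mem _ _ hvB)
        · rw [span_le, Set.singleton_subset_iff]; exact hvB
      have heq : span D (Set.range (B : Fin m → Fin n → D)) =
          span D (Set.range (A : Fin m → Fin n → D)) ⊔ span D {v} := le_antisymm hle hge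
      rw [mrank'_eq, heq, finrank_sup_span_singleton _ hv, ← mrank'_eq, hrank]
    · -- nonzero rows of B = nonzero rows of A
      have hset : {i | ∃ j, B i j ≠ 0} = {i | ∃ j, A i j ≠ 0} := by
        ext i
        simp only [Set.mem_setOf_eq]
        constructor
        · rintro ⟨j, hj⟩
          by_contra hA0
          push_neg at hA0
          rcases eq_or_ne (u i) 0 with h0 | h0
          · apply hj
            have := hBrow i
            rw [h0, zero_smul, add_zero] at this
            rw [show B i j = (B i) j from rfl, this]
            exact hA0 j
          · exact (hsupp i h0).elim fun j hj' => hj' (hA0 j)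
        · rintro ⟨j, hj⟩
          by_contra hB0
          push_neg at hB0
          have hBi : (B i : Fin n → D) = 0 := funext hB0
          rw [hBrow i] at hBi
          rcases eq_or_ne (u i) 0 with h0 | h0
          · rw [h0, zero_smul, add_zero] at hBi
            exact hj (congrFun hBi j)
          · apply hv
            have : v = (u i)⁻¹ • (-(A i)) := by
              have : u i • v = -(A i) := eq_neg_of_add_eq_zero_right hBi
              rw [← this, smul_smul, inv_mul_cancel₀ h0, one_smul]
            rw [this]
            exact smul_mem _ _ (neg_mem (subset_span ⟨i, rfl⟩))
      rw [hset, hcard]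
  · have : B - A = op u v := by rw [hB]; abel
    rw [this]
    exact mrank'_op_eq_one hu0 hv0

lemma vecMul_eq_sum_smul {p q : ℕ} (y : Fin p → D) (M : Matrix (Fin p) (Fin q) D) :
    y ᵥ* M = ∑ t, y t • (M t : Fin q → D) := by
  funext j
  simp [Matrix.vecMul, dotProduct, Finset.sum_apply, Pi.smul_apply, smul_eq_mul]

lemma single_decomp {p : ℕ} (y : Fin p → D) :
    y = ∑ t, y t • (Pi.single t 1 : Fin p → D) := by
  have hy : y = ∑ t, Pi.single t (y t) := (Finset.univ_sum_single y).symm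
  rw [hy]
  congr 1
  funext t
  funext j
  by_cases h : j = t <;> simp [Pi.single_apply, h]

/-- `x ↦ (x, x ᵥ* B)` as a linear map. -/
noncomputable def psi {p q : ℕ} (B : Matrix (Fin p) (Fin q) D) :
    (Fin p → D) →ₗ[D] (Fin p ⊕ Fin q → D) where
  toFun x := Sum.elim x (x ᵥ* B)
  map_add' x y := by
    funext j; cases j <;> simp [Matrix.add_vecMul]
  map_smul' c x := by
    funext j; cases j <;> simp [Matrix.vecMul, dotProduct, Finset.mul_sum, mul_assoc]

lemma psi_apply {p q : ℕ} (B : Matrix (Fin p) (Fin q) D) (x : Fin p → D) :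
    psi B x = Sum.elim x (x ᵥ* B) := rfl

lemma psi_injective {p q : ℕ} (B : Matrix (Fin p) (Fin q) D) :
    Function.Injective (psi B) := by
  intro x y h
  funext j
  exact congrFun h (Sum.inl j)

/-- `y ↦ (0, y)` as a linear map. -/
noncomputable def iota (p : ℕ) {q : ℕ} :
    (Fin q → D) →ₗ[D] (Fin p ⊕ Fin q → D) where
  toFun y := Sum.elim (0 : Fin p → D) y
  map_add' x y := by funext j; cases j <;> simp
  map_smul' c x := by funext j; cases j <;> simp

lemma iota_apply {p q : ℕ} (y : Fin q → D) :
    iota p (D := D) y = Sum.elim (0 : Fin p → D) y := rfl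

lemma iota_injective (p : ℕ) {q : ℕ} : Function.Injective (iota p (D := D) (q := q)) := by
  intro x y h
  funext j
  exact congrFun h (Sum.inr j)

lemma row_fromColumns {p q s : ℕ} (M : Matrix (Fin p) (Fin q) D) (N : Matrix (Fin p) (Fin s) D)
    (i : Fin p) : (fromCols M N : Fin p → Fin q ⊕ Fin s → D) i = Sum.elim (M i) (N i) := by
  funext j; cases j <;> simp [fromCols]

lemma rows_one_fromColumns_eq {p q : ℕ} (B : Matrix (Fin p) (Fin q) D) :
    (fromCols (1 : Matrix (Fin p) (Fin p) D) B : Fin p → Fin p ⊕ Fin q → D)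
      = fun i => psi B (Pi.single i 1) := by
  funext i j
  cases j with
  | inl j => simp [fromCols, psi_apply, Matrix.one_apply, Pi.single_apply, eq_comm]
  | inr j => simp [fromCols, psi_apply, Matrix.single_one_vecMul]

lemma span_rows_one_fromColumns {p q : ℕ} (B : Matrix (Fin p) (Fin q) D) :
    span D (Set.range (fromCols (1 : Matrix (Fin p) (Fin p) D) B :
      Fin p → Fin p ⊕ Fin q → D)) = LinearMap.range (psi B) := by
  rw [rows_one_fromColumns_eq]
  apply le_antisymm
  · rw [span_le]; rintro x ⟨i, rfl⟩; exact ⟨_, rfl⟩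
  · rintro x ⟨w, rfl⟩
    rw [show w = ∑ t, w t • (Pi.single t 1 : Fin p → D) from single_decomp w, map_sum]
    apply sum_mem
    intro t _
    rw [_root_.map_smul]
    exact smul_mem _ _ (subset_span ⟨t, rfl⟩)

lemma key_row_identity {p q : ℕ} (X : Matrix (Fin p) (Fin p) D) (Y B : Matrix (Fin p) (Fin q) D)
    (i : Fin p) :
    (fromCols X Y : Fin p → Fin p ⊕ Fin q → D) i
      = psi B (X i) + iota p ((Y - X * B) i) := by
  rw [row_fromColumns, psi_apply, iota_apply]
  funext j
  cases j with
  | inl j => simp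
  | inr j => simp [Matrix.vecMul, Matrix.mul_apply, dotProduct, Matrix.sub_apply]

/-- Lemma B: rank of the stacked matrix. -/
lemma mrank'_stacked {p q : ℕ} (X : Matrix (Fin p) (Fin p) D) (Y B : Matrix (Fin p) (Fin q) D) :
    mrank' (fromRows (fromCols X Y) (fromCols 1 B)) = p + mrank' (Y - X * B) := by
  rw [mrank'_eq (fromRows (fromCols X Y) (fromCols 1 B))]
  have hrows : ((fromRows (fromCols X Y) (fromCols 1 B)) :
      Fin p ⊕ Fin p → Fin p ⊕ Fin q → D)
      = Sum.elim (fromCols X Y : Fin p → Fin p ⊕ Fin q → D)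
          (fromCols 1 B : Fin p → Fin p ⊕ Fin q → D) := by
    funext i; cases i <;> rfl
  rw [hrows]
  erw [Set.Sum.elim_range]
  rw [span_union, span_rows_one_fromColumns]
  set q2 : Submodule D (Fin p ⊕ Fin q → D) := LinearMap.range (psi B) with hq2
  set q3 : Submodule D (Fin p ⊕ Fin q → D) :=
    Submodule.map (iota p) (span D (Set.range ((Y - X * B) : Fin p → Fin q → D))) with hq3
  have hsups : span D (Set.range (fromCols X Y : Fin p → Fin p ⊕ Fin q → D)) ⊔ q2
      = q2 ⊔ q3 := by
    apply le_antisymm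
    · refine sup_le ?_ le_sup_left
      rw [span_le]
      rintro x ⟨i, rfl⟩
      rw [key_row_identity X Y B i]
      exact add_mem (le_sup_left (b := q3) ⟨X i, rfl⟩)
        (le_sup_right (a := q2) (Submodule.mem_map_of_mem (subset_span ⟨i, rfl⟩)))
    · refine sup_le le_sup_right ?_
      rw [hq3, Submodule.map_span, span_le]
      rintro x ⟨y, ⟨i, rfl⟩, rfl⟩
      have hid : iota p ((Y - X * B) i)
          = (fromCols X Y : Fin p → Fin p ⊕ Fin q → D) i - psi B (X i) := by
        rw [key_row_identity X Y B i]; abel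
      rw [hid]
      exact sub_mem (le_sup_left (b := q2) (subset_span ⟨i, rfl⟩))
        (le_sup_right (a := span D (Set.range (fromCols X Y : Fin p → Fin p ⊕ Fin q → D)))
          ⟨X i, rfl⟩)
  rw [hsups]
  have hinf : q2 ⊓ q3 = ⊥ := by
    rw [eq_bot_iff]
    rintro x ⟨⟨w, rfl⟩, hx3⟩
    obtain ⟨y, _, hy⟩ := hx3
    have hw : w = 0 := by
      funext j
      have := congrFun hy (Sum.inl j)
      simpa [iota_apply, psi_apply] using this.symm
    simp [hw, Submodule.mem_bot, psi_apply]
  have h2 : finrank D ↥q2 = p := by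
    rw [hq2]
    simpa using LinearMap.finrank_range_of_inj (psi_injective B)
  have h3 : finrank D ↥q3 = mrank' (Y - X * B) := by
    rw [mrank'_eq (Y - X * B), hq3]
    exact (LinearEquiv.finrank_eq
      (Submodule.equivMapOfInjective (iota p) (iota_injective p) _)).symm
  have hfin := Submodule.finrank_sup_add_finrank_inf_eq q2 q3
  rw [hinf] at hfin
  simp only [finrank_bot, add_zero] at hfin
  rw [hfin, h2, h3]

/-- If `Y = X * C` and `(X, Y)` has rank `p`, then `X` is invertible. -/
lemma exists_inverse_of_fromColumns {p q : ℕ} (X : Matrix (Fin p) (Fin p) D)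
    (C : Matrix (Fin p) (Fin q) D)
    (h : mrank' (fromCols X (X * C)) = p) :
    ∃ X' : Matrix (Fin p) (Fin p) D, X' * X = 1 ∧ X * X' = 1 := by
  have hrowsX : (fromCols X (X * C) : Fin p → Fin p ⊕ Fin q → D)
      = fun i => psi C (X i) := by
    funext i j
    cases j <;> rfl
  have hrankX : mrank' X = p := by
    rw [mrank'_eq X]
    rw [mrank'_eq (fromCols X (X * C)), hrowsX] at h
    have hspan : span D (Set.range fun i => psi C (X i))
        = Submodule.map (psi C) (span D (Set.range (X : Fin p → Fin p → D))) := by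
      rw [Submodule.map_span]
      congr 1
      erw [← Set.range_comp]
      rfl
    rw [hspan] at h
    exact (LinearEquiv.finrank_eq
      (Submodule.equivMapOfInjective (psi C) (psi_injective C) _)).trans h
  have hrange : LinearMap.range (Matrix.vecMulLinear X) = ⊤ := by
    apply Submodule.eq_top_of_finrank_eq
    rw [range_vecMulLinear, show Set.range X.row = Set.range (X : Fin p → Fin p → D) from rfl,
        ← mrank'_eq X, hrankX]
    simp [Module.finrank_pi]
  have hker : LinearMap.ker (Matrix.vecMulLinear X) = ⊥ := by
    have hrn := LinearMap.finrank_range_add_finrank_ker (Matrix.vecMulLinear X)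
    rw [hrange, finrank_top] at hrn
    have hk : finrank D ↥(LinearMap.ker (Matrix.vecMulLinear X)) = 0 := by omega
    exact Submodule.finrank_eq_zero.mp hk
  have hbij : Function.Bijective (Matrix.vecMulLinear X) :=
    ⟨LinearMap.ker_eq_bot.mp hker, LinearMap.range_eq_top.mp hrange⟩
  set e := LinearEquiv.ofBijective (Matrix.vecMulLinear X) hbij with he
  set X' : Matrix (Fin p) (Fin p) D := Matrix.of (fun i j => e.symm (Pi.single i 1) j) with hX'
  have hX'row : ∀ i, (X' : Fin p → Fin p → D) i = e.symm (Pi.single i 1) := fun i => rfl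
  have he_apply : ∀ x, e x = x ᵥ* X := fun x => rfl
  have hmul_row : ∀ (M N : Matrix (Fin p) (Fin p) D) i j, (M * N) i j = ((M i) ᵥ* N) j := by
    intro M N i j
    simp [Matrix.mul_apply, Matrix.vecMul, dotProduct]
  have h1 : X' * X = 1 := by
    ext i j
    rw [hmul_row, hX'row, show (e.symm (Pi.single i 1)) ᵥ* X = e (e.symm (Pi.single i 1)) from rfl,
      LinearEquiv.apply_symm_apply]
    simp [Matrix.one_apply, Pi.single_apply, eq_comm]
  have hsymm : ∀ y : Fin p → D, y ᵥ* X' = e.symm y := by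
    intro y
    rw [vecMul_eq_sum_smul]
    calc ∑ t, y t • (X' : Fin p → Fin p → D) t
        = ∑ t, y t • e.symm (Pi.single t 1) := by simp [hX'row]
      _ = e.symm (∑ t, y t • (Pi.single t 1 : Fin p → D)) := by rw [map_sum]; simp
      _ = e.symm y := by rw [← single_decomp y]
  have h2 : X * X' = 1 := by
    ext i j
    have hXi : (X i : Fin p → D) = e (Pi.single i 1) := by
      rw [he_apply, Matrix.single_one_vecMul]; rfl
    rw [hmul_row, hsymm, hXi, LinearEquiv.symm_apply_apply]
    simp [Matrix.one_apply, Pi.single_apply, eq_comm]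
  exact ⟨X', h1, h2⟩

lemma rows_in_line {p q : ℕ} {M : Matrix (Fin p) (Fin q) D} (h : mrank' M ≤ 1) :
    ∃ g : Fin q → D, ∀ i, ∃ c : D, (M i : Fin q → D) = c • g := by
  rw [mrank'_eq] at h
  obtain ⟨g, hg⟩ := finrank_le_one_iff.mp h
  refine ⟨(g : Fin q → D), fun i => ?_⟩
  obtain ⟨c, hc⟩ := hg ⟨M i, subset_span ⟨i, rfl⟩⟩
  exact ⟨c, (congrArg Subtype.val hc).symm⟩

lemma op_eq_of_rows {p q : ℕ} {M : Matrix (Fin p) (Fin q) D} {α : Fin p → D} {β : Fin q → D}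
    (h : ∀ i, (M i : Fin q → D) = α i • β) : M = op α β := by
  funext i j
  have := congrFun (h i) j
  simpa [op, Pi.smul_apply, smul_eq_mul] using this

/-- Lemma R: two rank-one perturbation representations force `Z` itself to be rank one. -/
lemma exists_op_rep {p q : ℕ} (Z : Matrix (Fin p) (Fin q) D) (w : Fin p → D) (v : Fin q → D)
    (s : D) (hs : s - 1 ≠ 0)
    (h1 : mrank' (Z - op w v) ≤ 1)
    (h2 : mrank' (Z - op (fun i => w i * s) v) ≤ 1) :
    ∃ (α : Fin p → D) (β : Fin q → D), Z = op α β := by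
  classical
  by_cases hw : w = 0
  · obtain ⟨g, hg⟩ := rows_in_line h1
    choose a ha using hg
    refine ⟨a, g, op_eq_of_rows fun i => ?_⟩
    have h0 : op w v = 0 := by funext i j; simp [op, hw]
    have hi := ha i
    rw [h0, sub_zero] at hi
    exact hi
  · obtain ⟨i₀, hi₀⟩ : ∃ i, w i ≠ 0 := by
      by_contra hc; push_neg at hc; exact hw (funext hc)
    obtain ⟨g, hg⟩ := rows_in_line h1
    choose a ha using hg
    obtain ⟨g', hg'⟩ := rows_in_line h2
    choose a' ha' using hg'
    -- set b := a i • g etc.; rows: Z i = (a i) • g + w i • v = (a' i) • g' + (w i * s) • v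
    have hrow1 : ∀ i, (Z i : Fin q → D) = a i • g + w i • v := by
      intro i
      have := ha i
      have hsub : (Z - op w v) i = Z i - op w v i := rfl
      rw [hsub, op_row, sub_eq_iff_eq_add] at this
      exact this
    have hrow2 : ∀ i, (Z i : Fin q → D) = a' i • g' + (w i * s) • v := by
      intro i
      have := ha' i
      have hsub : (Z - op (fun i => w i * s) v) i = Z i - op (fun i => w i * s) v i := rfl
      rw [hsub, op_row, sub_eq_iff_eq_add] at this
      exact this
    have E : ∀ i, a i • g - a' i • g' = (w i * (s - 1)) • v := by
      intro i
      have h12 : a i • g + w i • v = a' i • g' + (w i * s) • v := by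
        rw [← hrow1 i, ← hrow2 i]
      have : a i • g - a' i • g' = (w i * s) • v - w i • v := by
        rw [sub_eq_sub_iff_add_eq_add]
        rw [h12]; abel
      rw [this, ← sub_smul, mul_sub, mul_one]
    by_cases hvb : v ∈ span D {g}
    · obtain ⟨t, ht⟩ := mem_span_singleton.mp hvb
      refine ⟨fun i => a i + w i * t, g, op_eq_of_rows fun i => ?_⟩
      rw [hrow1 i, ← ht, smul_smul, ← add_smul]
    · -- v ∉ span {g}
      have hwi₀ : w i₀ * (s - 1) ≠ 0 := mul_ne_zero hi₀ hs
      have hv_eq : v = ((w i₀ * (s - 1))⁻¹ * a i₀) • g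
          - ((w i₀ * (s - 1))⁻¹ * a' i₀) • g' := by
        have hE := E i₀
        have h2' : (w i₀ * (s - 1))⁻¹ • (a i₀ • g - a' i₀ • g')
            = (w i₀ * (s - 1))⁻¹ • ((w i₀ * (s - 1)) • v) := by rw [hE]
        rw [smul_smul, inv_mul_cancel₀ hwi₀, one_smul] at h2'
        rw [← h2', smul_sub, smul_smul, smul_smul]
      set P : D := (w i₀ * (s - 1))⁻¹ * a i₀ with hP
      set Q : D := -((w i₀ * (s - 1))⁻¹ * a' i₀) with hQ
      have hv_PQ : v = P • g + Q • g' := by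
        rw [hQ, neg_smul, ← sub_eq_add_neg]
        exact hv_eq
      have hQ0 : Q ≠ 0 := by
        intro h0
        apply hvb
        rw [hv_PQ, h0, zero_smul, add_zero]
        exact smul_mem _ _ (subset_span rfl)
      have hg'_eq : g' = Q⁻¹ • v - (Q⁻¹ * P) • g := by
        have hQg : Q • g' = v - P • g := by rw [hv_PQ]; abel
        have h2' : Q⁻¹ • (Q • g') = Q⁻¹ • (v - P • g) := by rw [hQg]
        rw [smul_smul, inv_mul_cancel₀ hQ0, one_smul] at h2'
        rw [h2', smul_sub, smul_smul]
      have hcoef : ∀ i, a' i = -(w i * (s - 1)) * Q := by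
        intro i
        have hsubg : a' i • g' = (a' i * Q⁻¹) • v - (a' i * (Q⁻¹ * P)) • g := by
          rw [hg'_eq, smul_sub, smul_smul, smul_smul]
        have h0 := E i
        rw [hsubg] at h0
        have h' : a i • g + (a' i * (Q⁻¹ * P)) • g
            = (w i * (s - 1)) • v + (a' i * Q⁻¹) • v := by
          rw [sub_eq_iff_eq_add.mp h0]
          abel
        have hstar : (a i + a' i * (Q⁻¹ * P)) • g = (w i * (s - 1) + a' i * Q⁻¹) • v := by
          rw [add_smul, add_smul]
          exact h'
        have hc2 : w i * (s - 1) + a' i * Q⁻¹ = 0 := by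
          by_contra hne
          apply hvb
          have hv' : v = (w i * (s - 1) + a' i * Q⁻¹)⁻¹ • ((a i + a' i * (Q⁻¹ * P)) • g) := by
            rw [hstar, smul_smul, inv_mul_cancel₀ hne, one_smul]
          rw [hv', smul_smul]
          exact smul_mem _ _ (subset_span rfl)
        have h1 : a' i * Q⁻¹ = -(w i * (s - 1)) := eq_neg_of_add_eq_zero_right hc2
        calc a' i = a' i * Q⁻¹ * Q := by rw [mul_assoc, inv_mul_cancel₀ hQ0, mul_one]
          _ = -(w i * (s - 1)) * Q := by rw [h1]
      refine ⟨w, (-((s - 1) * Q)) • g' + s • v, op_eq_of_rows fun i => ?_⟩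
      rw [hrow2 i, hcoef i, smul_add, smul_smul, smul_smul]
      congr 2
      noncomm_ring

/-- Separation lemma: a rank-one difference with independent row directions forces
the column part to be a right multiple of `α`. -/
lemma w_in_line {p q : ℕ} {α w : Fin p → D} {β v : Fin q → D}
    (hα : α ≠ 0) (hβ : β ≠ 0) (hv : v ∉ span D {β})
    (h : mrank' (op α β - op w v) ≤ 1) :
    ∃ d : D, w = fun i => α i * d := by
  obtain ⟨g, hg⟩ := rows_in_line h
  choose c hc using hg
  have hrow : ∀ i, α i • β - w i • v = c i • g := by
    intro i
    have := hc i
    have hsub : (op α β - op w v) i = op α β i - op w v i := rfl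
    rw [hsub, op_row, op_row] at this
    exact this
  obtain ⟨i₀, hαi₀⟩ : ∃ i, α i ≠ 0 := by
    by_contra hcon; push_neg at hcon; exact hα (funext hcon)
  set d : D := (α i₀)⁻¹ * w i₀ with hd
  refine ⟨d, ?_⟩
  by_contra hne
  obtain ⟨i₁, hi₁⟩ : ∃ i, w i ≠ α i * d := by
    by_contra hcon; push_neg at hcon; exact hne (funext hcon)
  -- v ∈ span {g}
  have hvspan : v ∈ span D {g} := by
    have hcomb : (α i₁ * (α i₀)⁻¹) • (α i₀ • β - w i₀ • v) - (α i₁ • β - w i₁ • v)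
        = (w i₁ - α i₁ * d) • v := by
      rw [smul_sub, smul_smul, smul_smul, mul_assoc, inv_mul_cancel₀ hαi₀, mul_one]
      rw [hd, sub_smul, ← mul_assoc]
      abel
    have hmem : (w i₁ - α i₁ * d) • v ∈ span D {g} := by
      rw [← hcomb, hrow i₀, hrow i₁, smul_smul]
      exact sub_mem (smul_mem _ _ (subset_span rfl)) (smul_mem _ _ (subset_span rfl))
    have hne0 : w i₁ - α i₁ * d ≠ 0 := sub_ne_zero.mpr hi₁
    have := smul_mem (span D {g}) (w i₁ - α i₁ * d)⁻¹ hmem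
    rwa [smul_smul, inv_mul_cancel₀ hne0, one_smul] at this
  have hβspan : β ∈ span D {g} := by
    have : α i₀ • β = c i₀ • g + w i₀ • v := by
      rw [← hrow i₀]; abel
    have hmem : α i₀ • β ∈ span D {g} := by
      rw [this]
      exact add_mem (smul_mem _ _ (subset_span rfl)) (smul_mem _ _ hvspan)
    have := smul_mem (span D {g}) (α i₀)⁻¹ hmem
    rwa [smul_smul, inv_mul_cancel₀ hαi₀, one_smul] at this
  -- conclude v ∈ span {β}, contradiction
  apply hv
  obtain ⟨t, ht⟩ := mem_span_singleton.mp hvspan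
  obtain ⟨t', ht'⟩ := mem_span_singleton.mp hβspan
  have ht'0 : t' ≠ 0 := by
    rintro rfl
    rw [zero_smul] at ht'
    exact hβ ht'.symm
  rw [mem_span_singleton]
  refine ⟨t * t'⁻¹, ?_⟩
  rw [← ht, ← ht', smul_smul, mul_assoc, inv_mul_cancel₀ ht'0, mul_one]

/-- The subspace of vectors vanishing on `S`, with its dimension. -/
lemma exists_vanishing_submodule {p : ℕ} (S : Set (Fin p)) :
    ∃ W : Submodule D (Fin p → D), (∀ c, c ∈ W ↔ ∀ i ∈ S, c i = 0) ∧
      S.ncard + finrank D ↥W = p := by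
  classical
  set π : (Fin p → D) →ₗ[D] (↥S → D) := LinearMap.pi fun i => LinearMap.proj (i : Fin p)
  have hπ : ∀ (c : Fin p → D) (i : ↥S), π c i = c i := fun c i => rfl
  refine ⟨LinearMap.ker π, ?_, ?_⟩
  · intro c
    constructor
    · intro hc i hi
      exact congrFun (LinearMap.mem_ker.mp hc) ⟨i, hi⟩
    · intro hc
      rw [LinearMap.mem_ker]
      funext i
      exact hc i i.2
  · have hsurj : Function.Surjective π := by
      intro f
      refine ⟨fun i => if h : i ∈ S then f ⟨i, h⟩ else 0, ?_⟩
      funext i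
      rw [hπ]
      simp [i.2]
    have hrn := LinearMap.finrank_range_add_finrank_ker π
    rw [LinearMap.range_eq_top.mpr hsurj, finrank_top] at hrn
    have hcard : finrank D (↥S → D) = S.ncard := by
      rw [Module.finrank_pi]
      rw [Set.ncard_eq_toFinset_card']
      simp [Set.toFinset_card]
    rw [hcard] at hrn
    rw [Module.finrank_pi] at hrn
    simp only [Fintype.card_fin] at hrn
    omega

/-- There is a nonzero-row index `i₀` of `A` and a left null vector of `A` not vanishing
at `i₀`. -/
lemma exists_sep_index {p q r k : ℕ} (A : Matrix (Fin p) (Fin q) D)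
    (hrank : mrank' A = r) (hcard : {i | ∃ j, A i j ≠ 0}.ncard = k) (hkr : r < k) :
    ∃ (i₀ : Fin p) (c : Fin p → D), (∃ j, A i₀ j ≠ 0) ∧ c ᵥ* A = 0 ∧ c i₀ ≠ 0 := by
  by_contra hcon
  push_neg at hcon
  set S : Set (Fin p) := {i | ∃ j, A i j ≠ 0} with hS
  obtain ⟨W, hWmem, hWrank⟩ := exists_vanishing_submodule (D := D) S
  have hker_le : LinearMap.ker (Matrix.vecMulLinear A) ≤ W := by
    intro c hc
    rw [hWmem]
    intro i hi
    exact hcon i c hi (LinearMap.mem_ker.mp hc)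
  have hkerrank := LinearMap.finrank_range_add_finrank_ker (Matrix.vecMulLinear A)
  rw [range_vecMulLinear, show Set.range A.row = Set.range (A : Fin p → Fin q → D) from rfl,
    ← mrank'_eq A, hrank, Module.finrank_pi] at hkerrank
  simp only [Fintype.card_fin] at hkerrank
  have hmono : finrank D ↥(LinearMap.ker (Matrix.vecMulLinear A)) ≤ finrank D ↥W :=
    Submodule.finrank_mono hker_le
  rw [hcard] at hWrank
  omega

/-- From `|E| > 2`, get a scalar in `E` different from `0` and `1`. -/
lemma exists_scalar (E : Subring D) (hEcard : (2 : Cardinal) < Cardinal.mk E) :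
    ∃ s : D, s ∈ E ∧ s ≠ 0 ∧ s ≠ 1 := by
  by_contra hcon
  push_neg at hcon
  have hsub : (E : Set D) ⊆ {0, 1} := by
    intro x hx
    rcases eq_or_ne x 0 with h | h
    · exact Or.inl h
    · exact Or.inr (hcon x hx h)
  have h1 : Cardinal.mk E ≤ Cardinal.mk ({0, 1} : Set D) := Cardinal.mk_le_mk_of_subset hsub
  have h2 : Cardinal.mk ({0, 1} : Set D) ≤ 2 := by
    have h3 := Cardinal.mk_insert_le (a := (0 : D)) (s := ({1} : Set D))
    rw [Cardinal.mk_singleton] at h3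
    calc Cardinal.mk ({0, 1} : Set D) ≤ 1 + 1 := h3
      _ = 2 := by norm_num
  exact absurd (hEcard.trans_le (h1.trans h2)) (lt_irrefl _)

/-- Existence of a vector with entries in `E`, outside a small subspace and outside a line. -/
lemma exists_good_v {q : ℕ} (E : Subring D) (s : D) (hsE : s ∈ E) (hs0 : s ≠ 0) (hs1 : s ≠ 1)
    (hn2 : 2 ≤ q) (p : Submodule D (Fin q → D)) (hp : finrank D ↥p < q)
    (β : Fin q → D) :
    ∃ v : Fin q → D, (∀ j, v j ∈ E) ∧ v ∉ p ∧ v ∉ span D {β} := by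
  classical
  have hsingleE : ∀ (l : Fin q) (x : D), x ∈ E → ∀ j, (Pi.single l x : Fin q → D) j ∈ E := by
    intro l x hx j
    by_cases h : j = l <;> simp [Pi.single_apply, h, hx, E.zero_mem]
  -- a standard basis vector outside p
  obtain ⟨j₀, hj₀⟩ : ∃ j₀, (Pi.single j₀ 1 : Fin q → D) ∉ p := by
    by_contra hcon
    push_neg at hcon
    have htop : p = ⊤ := by
      rw [eq_top_iff]
      intro y _
      rw [single_decomp y]
      exact sum_mem fun t _ => smul_mem _ _ (hcon t)
    rw [htop, finrank_top, Module.finrank_pi] at hp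
    simp at hp
  set x : Fin q → D := Pi.single j₀ 1 with hx
  by_cases hxβ : x ∈ span D {β}
  · -- need a standard vector outside span {β}
    have hβ0 : β ≠ 0 := by
      rintro rfl
      rw [span_zero_singleton] at hxβ
      have hx0 : x j₀ = 0 := congrFun ((mem_bot D).mp hxβ) j₀
      simp [hx] at hx0
    obtain ⟨l, hl⟩ : ∃ l, (Pi.single l 1 : Fin q → D) ∉ span D {β} := by
      by_contra hcon
      push_neg at hcon
      obtain ⟨j₁, hj₁β⟩ : ∃ j₁, β j₁ ≠ 0 := by
        by_contra hc; push_neg at hc; exact hβ0 (funext hc)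
      obtain ⟨j₂, hj₂⟩ : ∃ j₂ : Fin q, j₂ ≠ j₁ := by
        rcases eq_or_ne j₁ ⟨0, by omega⟩ with h | h
        · exact ⟨⟨1, by omega⟩, by rw [h]; intro hc; simp [Fin.ext_iff] at hc⟩
        · exact ⟨⟨0, by omega⟩, fun hc => h hc.symm⟩
      obtain ⟨t₂, ht₂⟩ := mem_span_singleton.mp (hcon j₂)
      have h1 : t₂ * β j₂ = 1 := by
        have := congrFun ht₂ j₂
        simpa [Pi.single_apply] using this
      have h0 : t₂ * β j₁ = 0 := by
        have := congrFun ht₂ j₁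
        simpa [Pi.single_apply, hj₂.symm, (Ne.symm hj₂)] using this
      have ht₂0 : t₂ ≠ 0 := fun h => by rw [h, zero_mul] at h1; exact zero_ne_one h1
      have : β j₁ = 0 := by
        have := congrArg (t₂⁻¹ * ·) h0
        simpa [← mul_assoc, inv_mul_cancel₀ ht₂0] using this
      exact hj₁β this
    set y : Fin q → D := Pi.single l 1 with hy
    by_cases hlp : y ∈ p
    · refine ⟨x + y, fun j => E.add_mem (hsingleE j₀ 1 E.one_mem j) (hsingleE l 1 E.one_mem j),
        ?_, ?_⟩
      · intro hmem
        exact hj₀ (by simpa using sub_mem hmem hlp)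
      · intro hmem
        exact hl (by simpa using sub_mem hmem hxβ)
    · -- both x + y and x + s • y avoid span {β}; at most one is in p
      have havoid : ∀ t : D, t ≠ 0 → x + t • y ∉ span D {β} := by
        intro t ht hmem
        have : t • y ∈ span D {β} := by simpa using sub_mem hmem hxβ
        have := smul_mem (span D {β}) t⁻¹ this
        rw [smul_smul, inv_mul_cancel₀ ht, one_smul] at this
        exact hl this
      by_cases h1p : x + (1 : D) • y ∈ p
      · refine ⟨x + s • y, fun j => E.add_mem (hsingleE j₀ 1 E.one_mem j) ?_, ?_, havoid s hs0⟩
        · have : (s • y) j = s * y j := rfl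
          rw [this]
          exact E.mul_mem hsE (hsingleE l 1 E.one_mem j)
        · intro h2p
          have : ((1 : D) - s) • y ∈ p := by
            have := sub_mem h1p h2p
            simpa [sub_smul] using this
          have hs' : (1 : D) - s ≠ 0 := sub_ne_zero.mpr (Ne.symm hs1)
          have := smul_mem p ((1 : D) - s)⁻¹ this
          rw [smul_smul, inv_mul_cancel₀ hs', one_smul] at this
          exact hlp this
      · refine ⟨x + (1 : D) • y, fun j => E.add_mem (hsingleE j₀ 1 E.one_mem j) ?_, h1p,
          havoid 1 one_ne_zero⟩
        have : ((1 : D) • y) j = 1 * y j := rfl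
        rw [this]
        exact E.mul_mem E.one_mem (hsingleE l 1 E.one_mem j)
  · exact ⟨x, hsingleE j₀ 1 E.one_mem, hj₀, hxβ⟩


lemma mul_op {p q r' : ℕ} (X : Matrix (Fin p) (Fin q) D) (u : Fin q → D) (v : Fin r' → D) :
    X * op u v = op (X *ᵥ u) v := by
  funext i j
  simp [op, Matrix.mul_apply, Matrix.mulVec, dotProduct, Finset.sum_mul, mul_assoc]

lemma mulVec_single' {p q : ℕ} (X : Matrix (Fin p) (Fin q) D) (i : Fin q) (x : D) :
    X *ᵥ Pi.single i x = fun j => X j i * x := by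
  funext j
  simp [Matrix.mulVec, dotProduct, Pi.single_apply]

lemma mulVec_scale {p q : ℕ} (X : Matrix (Fin p) (Fin q) D) (u : Fin q → D) (s : D) :
    X *ᵥ (fun i => u i * s) = fun j => (X *ᵥ u) j * s := by
  funext j
  simp [Matrix.mulVec, dotProduct, Finset.sum_mul, mul_assoc]

lemma finrank_sup_le {V : Type} [AddCommGroup V] [Module D V] [FiniteDimensional D V]
    (p q : Submodule D V) :
    finrank D ↥(p ⊔ q) ≤ finrank D ↥p + finrank D ↥q := by
  have h := Submodule.finrank_sup_add_finrank_inf_eq p q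
  omega

lemma finrank_span_singleton_le' {V : Type} [AddCommGroup V] [Module D V] (v : V) :
    finrank D ↥(span D ({v} : Set V)) ≤ 1 := by
  rcases eq_or_ne v 0 with rfl | hv
  · rw [span_zero_singleton]
    simp
  · rw [finrank_span_singleton hv]

lemma exists_second {p k : ℕ} {S : Set (Fin p)} (hcard : S.ncard = k) (hk : 2 ≤ k)
    (i₁ : Fin p) (hi₁ : i₁ ∈ S) : ∃ i₂ ∈ S, i₂ ≠ i₁ := by
  by_contra hcon
  push_neg at hcon
  have hsub : S ⊆ {i₁} := fun i hi => Set.mem_singleton_iff.mpr (hcon i hi)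
  have hle := Set.ncard_le_ncard hsub (Set.finite_singleton i₁)
  rw [hcard, Set.ncard_singleton] at hle
  omega

end GrassmannAux

open GrassmannAux Submodule Module in
/-- Lemma 4.2: if `(X, Y)` is a matrix representation of a point of the Grassmann space
(i.e. `rank (X, Y) = m`) and `ad((X,Y), (I,B)) = 1` (i.e. the stacked matrix has rank `m+1`)
for every `B ∈ M_{k,r+1}(E^{m×n})` adjacent to `A ∈ M_{k,r}(E^{m×n})`, then `X` is invertible
and `Y = XA`. -/
theorem grassmann_adjacency_lemma_general_case
    {D : Type} [DivisionRing D] (E : Subring D)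
    (hEfield : ∀ x ∈ E, x⁻¹ ∈ E) (hEcard : (2 : Cardinal) < Cardinal.mk E)
    {m n k r : ℕ} (hr : 1 ≤ r) (hkr : r < k) (hm : k ≤ m) (hn : r < n)
    (A : Matrix (Fin m) (Fin n) D) (hA : MemMkr E k r A)
    (X : Matrix (Fin m) (Fin m) D) (Y : Matrix (Fin m) (Fin n) D)
    (hXY : mrank' (Matrix.fromCols X Y) = m)
    (hadj : ∀ B : Matrix (Fin m) (Fin n) D, MemMkr E k (r + 1) B → mrank' (B - A) = 1 →
      mrank' (Matrix.fromRows (Matrix.fromCols X Y) (Matrix.fromCols 1 B)) = m + 1) :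
    IsUnit X ∧ Y = X * A := by
  classical
  obtain ⟨hAE, hArank, hAcard⟩ := hA
  set S : Set (Fin m) := {i | ∃ j, A i j ≠ 0} with hS
  set RowA : Submodule D (Fin n → D) := span D (Set.range (A : Fin m → Fin n → D)) with hRowA
  have hk2 : 2 ≤ k := by omega
  have hn2 : 2 ≤ n := by omega
  obtain ⟨s, hsE, hs0, hs1⟩ := exists_scalar E hEcard
  have hRowArank : finrank D ↥RowA = r := hArank
  have hRowAlt : finrank D ↥RowA < n := by omega
  set Z : Matrix (Fin m) (Fin n) D := Y - X * A with hZdef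
  -- the key consequence of hadj
  have key : ∀ (u : Fin m → D) (v : Fin n → D), (∀ i, u i ∈ E) →
      (∀ i, u i ≠ 0 → ∃ j, A i j ≠ 0) →
      (∃ c, c ᵥ* A = 0 ∧ c ⬝ᵥ u ≠ 0) → (∀ j, v j ∈ E) → v ∉ RowA →
      mrank' (Z - op (X *ᵥ u) v) = 1 := by
    rintro u v huE hsupp ⟨c, hc, hcu⟩ hvE hv
    obtain ⟨hB, hBA⟩ := memMkr_pert E A hAE hArank hAcard u v huE hvE hsupp c hc hcu hv
    have hst := hadj (A + op u v) hB hBA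
    rw [mrank'_stacked] at hst
    have h1 : mrank' (Y - X * (A + op u v)) = 1 := by omega
    have h2 : Y - X * (A + op u v) = Z - op (X *ᵥ u) v := by
      rw [Matrix.mul_add, mul_op, sub_add_eq_sub_sub, hZdef]
    rwa [h2] at h1
  -- separating index
  obtain ⟨i₀, c₀, hi₀S, hc₀, hc₀i⟩ := exists_sep_index A hArank hAcard hkr
  set u₀ : Fin m → D := Pi.single i₀ 1 with hu₀
  have hu₀E : ∀ i, u₀ i ∈ E := by
    intro i
    by_cases h : i = i₀ <;> simp [hu₀, Pi.single_apply, h, E.one_mem, E.zero_mem]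
  have hu₀supp : ∀ i, u₀ i ≠ 0 → ∃ j, A i j ≠ 0 := by
    intro i hi
    have : i = i₀ := by
      by_contra h
      exact hi (by simp [hu₀, Pi.single_apply, h])
    exact this ▸ hi₀S
  have hc₀u₀ : c₀ ⬝ᵥ u₀ ≠ 0 := by
    rw [hu₀]
    simpa [dotProduct, Pi.single_apply] using hc₀i
  -- Z is rank ≤ 1
  obtain ⟨v₀, hv₀E, hv₀p, -⟩ := exists_good_v E s hsE hs0 hs1 hn2 RowA hRowAlt 0
  set w₀ : Fin m → D := X *ᵥ u₀ with hw₀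
  have hz1 : mrank' (Z - op w₀ v₀) ≤ 1 :=
    le_of_eq (key u₀ v₀ hu₀E hu₀supp ⟨c₀, hc₀, hc₀u₀⟩ hv₀E hv₀p)
  have hz2 : mrank' (Z - op (fun i => w₀ i * s) v₀) ≤ 1 := by
    have hXs : X *ᵥ (fun i => u₀ i * s) = fun i => w₀ i * s := by
      rw [mulVec_scale, hw₀]
    have := key (fun i => u₀ i * s) v₀ (fun i => E.mul_mem (hu₀E i) hsE)
      (fun i hi => hu₀supp i (fun h0 => hi (by simp [h0])))
      ⟨c₀, hc₀, by
        have : c₀ ⬝ᵥ (fun i => u₀ i * s) = (c₀ ⬝ᵥ u₀) * s := by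
          simp [dotProduct, Finset.sum_mul, mul_assoc]
        rw [this]
        exact mul_ne_zero hc₀u₀ hs0⟩ hv₀E hv₀p
    rw [hXs] at this
    exact le_of_eq this
  obtain ⟨α, β, hαβ⟩ := exists_op_rep Z w₀ v₀ s (sub_ne_zero.mpr hs1) hz1 hz2
  -- main claim: Z = 0
  have hZ0 : Z = 0 := by
    by_contra hZ
    obtain ⟨i', j', hij'⟩ : ∃ i j, Z i j ≠ 0 := by
      by_contra hcon
      push_neg at hcon
      exact hZ (by funext i j; exact hcon i j)
    have hZαβ : Z i' j' = α i' * β j' := by rw [hαβ]; rfl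
    have hα : α ≠ 0 := by
      intro h0
      have h0' : α i' = 0 := by rw [congrFun h0 i']; rfl
      rw [hZαβ, h0', zero_mul] at hij'
      exact hij' rfl
    have hβ : β ≠ 0 := by
      intro h0
      have h0' : β j' = 0 := by rw [congrFun h0 j']; rfl
      rw [hZαβ, h0', mul_zero] at hij'
      exact hij' rfl
    obtain ⟨v₁, hv₁E, hv₁p, hv₁β⟩ := exists_good_v E s hsE hs0 hs1 hn2 RowA hRowAlt β
    -- every admissible u has X *ᵥ u ∈ α·D
    have hP : ∀ u : Fin m → D, (∀ i, u i ∈ E) → (∀ i, u i ≠ 0 → ∃ j, A i j ≠ 0) →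
        ∃ d, X *ᵥ u = fun i => α i * d := by
      intro u huE hsupp
      by_cases hcu : ∃ c, c ᵥ* A = 0 ∧ c ⬝ᵥ u ≠ 0
      · have h := key u v₁ huE hsupp hcu hv₁E hv₁p
        rw [hαβ] at h
        exact w_in_line hα hβ hv₁β (le_of_eq h)
      · push_neg at hcu
        have hsum_supp : ∀ i, (u + u₀) i ≠ 0 → ∃ j, A i j ≠ 0 := by
          intro i hi
          by_cases h : u i ≠ 0
          · exact hsupp i h
          · push_neg at h
            apply hu₀supp i
            intro h0
            exact hi (by simp [Pi.add_apply, h, h0])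
        have hsum_dot : c₀ ⬝ᵥ (u + u₀) ≠ 0 := by
          rw [dotProduct_add, hcu c₀ hc₀, zero_add]
          exact hc₀u₀
        have h1 := key (u + u₀) v₁ (fun i => E.add_mem (huE i) (hu₀E i)) hsum_supp
          ⟨c₀, hc₀, hsum_dot⟩ hv₁E hv₁p
        have h0 := key u₀ v₁ hu₀E hu₀supp ⟨c₀, hc₀, hc₀u₀⟩ hv₁E hv₁p
        rw [hαβ] at h1 h0
        obtain ⟨d₁, hd₁⟩ := w_in_line hα hβ hv₁β (le_of_eq h1)
        obtain ⟨d₀, hd₀⟩ := w_in_line hα hβ hv₁β (le_of_eq h0)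
        refine ⟨d₁ - d₀, ?_⟩
        funext i
        have hadd : (X *ᵥ (u + u₀)) i = (X *ᵥ u) i + (X *ᵥ u₀) i := by
          rw [Matrix.mulVec_add]; rfl
        have := congrFun hd₁ i
        rw [hadd, congrFun hd₀ i] at this
        have : (X *ᵥ u) i = α i * d₁ - α i * d₀ := by
          rw [eq_sub_iff_add_eq]; exact this
        rw [this, mul_sub]
    -- columns over S are multiples of α
    have hcol : ∀ i ∈ S, ∃ d, X *ᵥ Pi.single i (1 : D) = fun j => α j * d := by
      intro i hi
      apply hP
      · intro t
        by_cases h : t = i <;> simp [Pi.single_apply, h, E.one_mem, E.zero_mem]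
      · intro t ht
        have : t = i := by
          by_contra h
          exact ht (by simp [Pi.single_apply, h])
        exact this ▸ hi
    by_cases hax : ∃ i ∈ S, X *ᵥ Pi.single i (1 : D) ≠ 0
    · -- case (b): X is invertible, contradiction with two proportional columns
      obtain ⟨i₁, hi₁S, hi₁col⟩ := hax
      obtain ⟨d₁, hd₁⟩ := hcol i₁ hi₁S
      have hd₁0 : d₁ ≠ 0 := by
        rintro rfl
        exact hi₁col (by rw [hd₁]; funext j; rw [mul_zero]; rfl)
      have hcol_scaled : ∀ (i : Fin m) (d : D), d ≠ 0 →
          (X *ᵥ Pi.single i (1 : D)) = (fun j => α j * d) →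
          X *ᵥ Pi.single i d⁻¹ = α := by
        intro i d hd hcoli
        funext j
        rw [mulVec_single']
        show X j i * d⁻¹ = α j
        have hXji : X j i = α j * d := by
          have := congrFun hcoli j
          rw [mulVec_single'] at this
          simpa using this
        rw [hXji, mul_assoc, mul_inv_cancel₀ hd, mul_one]
      have hαcol : X *ᵥ Pi.single i₁ d₁⁻¹ = α := hcol_scaled i₁ d₁ hd₁0 hd₁
      have hY : Y = X * (A + op (Pi.single i₁ d₁⁻¹) β) := by
        rw [Matrix.mul_add, mul_op, hαcol, ← hαβ, hZdef]
        abel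
      obtain ⟨X', hX'1, hX'2⟩ := exists_inverse_of_fromColumns X (A + op (Pi.single i₁ d₁⁻¹) β)
        (by rw [← hY]; exact hXY)
      have hinj : ∀ u : Fin m → D, X *ᵥ u = 0 → u = 0 := by
        intro u hu
        have : X' *ᵥ (X *ᵥ u) = u := by
          rw [Matrix.mulVec_mulVec, hX'1, Matrix.one_mulVec]
        rw [hu, Matrix.mulVec_zero] at this
        exact this.symm
      obtain ⟨i₂, hi₂S, hi₂ne⟩ := exists_second hAcard hk2 i₁ hi₁S
      obtain ⟨d₂, hd₂⟩ := hcol i₂ hi₂S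
      have hd₂0 : d₂ ≠ 0 := by
        rintro rfl
        have hcol0 : X *ᵥ Pi.single i₂ (1 : D) = 0 := by
          rw [hd₂]; funext j; rw [mul_zero]; rfl
        have := hinj _ hcol0
        have h1 := congrFun this i₂
        simp at h1
      have hα₂ : X *ᵥ Pi.single i₂ d₂⁻¹ = α := hcol_scaled i₂ d₂ hd₂0 hd₂
      have hzero : X *ᵥ (Pi.single i₁ d₁⁻¹ - Pi.single i₂ d₂⁻¹) = 0 := by
        rw [Matrix.mulVec_sub, hαcol, hα₂, sub_self]
      have := hinj _ hzero
      have h1 := congrFun this i₁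
      rw [Pi.sub_apply] at h1
      have h2 : (Pi.single i₂ d₂⁻¹ : Fin m → D) i₁ = 0 := by
        simp [Pi.single_apply, hi₂ne.symm]
      rw [h2, sub_zero, Pi.single_eq_same] at h1
      exact hd₁0 (inv_eq_zero.mp h1)
    · -- case (a): all columns over S vanish; rank (X Y) too small
      push_neg at hax
      obtain ⟨W, hWmem, hWrank⟩ := exists_vanishing_submodule (D := D) S
      have hXrows : ∀ i, (X i : Fin m → D) ∈ W := by
        intro i
        rw [hWmem]
        intro t ht
        have := congrFun (hax t ht) i
        rw [mulVec_single'] at this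
        simpa using this
      -- row space of (X Y) is contained in map (psi A) W ⊔ span {iota m β}
      have hle : span D (Set.range (fromCols X Y : Fin m → Fin m ⊕ Fin n → D)) ≤
          Submodule.map (psi A) W ⊔ span D {iota m β} := by
        rw [span_le]
        rintro x ⟨i, rfl⟩
        rw [key_row_identity X Y A i]
        have hZrow : ((Y - X * A) i : Fin n → D) = α i • β := by
          rw [← hZdef, hαβ, op_row]
        rw [hZrow, _root_.map_smul]
        exact add_mem (le_sup_left (b := span D {iota m β})
            (Submodule.mem_map_of_mem (hXrows i)))
          (le_sup_right (a := Submodule.map (psi A) W)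
            (smul_mem _ _ (subset_span rfl)))
      have hfr : m ≤ finrank D ↥(Submodule.map (psi A) W ⊔ span D {iota m β}) := by
        have hfr0 := Submodule.finrank_mono hle
        rw [← mrank'_eq (fromCols X Y), hXY] at hfr0
        exact hfr0
      have hb1 : finrank D ↥(Submodule.map (psi A) W) ≤ finrank D ↥W :=
        Submodule.finrank_map_le _ _
      have hb2 := finrank_span_singleton_le' (D := D) (iota m β)
      have hb3 := finrank_sup_le (Submodule.map (psi A) W) (span D {iota m β})
      rw [hAcard] at hWrank
      omega
  -- endgame
  have hYXA : Y = X * A := by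
    have := hZ0
    rw [hZdef] at this
    exact sub_eq_zero.mp this
  obtain ⟨X', hX'1, hX'2⟩ := exists_inverse_of_fromColumns X A (by rw [← hYXA]; exact hXY)
  exact ⟨⟨⟨X, X', hX'2, hX'1⟩, rfl⟩, hYXA⟩
end
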